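/- arXiv:2202.01939 — 3 statements merged into one kernel-verified Lean document; each statement's English description precedes it below -/
import Mathlib

section
/- Let f(z) = z + Σ_{m=1}^{c} (1 + (z-1)e^z)^m/m. Then f is an entire function and its Taylor coefficients a_n (so f(z) = Σ a_n z^n) satisfy n! · a_n ~ c^{n-c-1} n^c as n → ∞. -/
open Filter Polynomial Finset

noncomputable def Lop (a : ℂ) : Module.End ℂ (Polynomial ℂ) := Polynomial.derivative + a • 1

lemma Lop_apply (a : ℂ) (p : ℂ[X]) : Lop a p = derivative p + a • p := by
  simp [Lop]

lemma iteratedDeriv_polyexp (a : ℂ) (n : ℕ) (p : ℂ[X]) :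
    iteratedDeriv n (fun z => p.eval z * Complex.exp (a*z))
      = fun z => ((Lop a ^ n) p).eval z * Complex.exp (a*z) := by
  induction n generalizing p with
  | zero => simp
  | succ n ih =>
    rw [iteratedDeriv_succ']
    have hd : (deriv fun z => p.eval z * Complex.exp (a*z))
        = fun z => (Lop a p).eval z * Complex.exp (a*z) := by
      funext z
      have h1 : HasDerivAt (fun z : ℂ => Complex.exp (a*z)) (Complex.exp (a*z) * a) z := by
        simpa using (((hasDerivAt_id z).const_mul a).cexp)
      have : HasDerivAt (fun z => p.eval z * Complex.exp (a*z)) _ z := (p.hasDerivAt z).mul h1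
      rw [this.deriv, Lop_apply]
      simp [smul_eq_mul]
      ring
    rw [hd, ih]
    have : (Lop a ^ (n+1)) p = (Lop a ^ n) (Lop a p) := by
      rw [pow_succ, Module.End.mul_apply]
    rw [this]

lemma Lop_pow_eval0 (a : ℂ) (n : ℕ) (p : ℂ[X]) :
    ((Lop a ^ n) p).eval 0
      = ∑ j ∈ range (n+1), (n.choose j : ℂ) * a^(n-j) * (derivative^[j] p).eval 0 := by
  have hcomm : Commute (Polynomial.derivative : Module.End ℂ (Polynomial ℂ)) (a • 1) :=
    (Commute.one_right _).smul_right a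
  rw [Lop, hcomm.add_pow]
  simp only [LinearMap.sum_apply, eval_finset_sum]
  refine Finset.sum_congr rfl fun j hj => ?_
  have h1 : ((a • (1:Module.End ℂ (Polynomial ℂ))) ^ (n-j)) = a^(n-j) • 1 := by
    rw [_root_.smul_pow, one_pow]
  rw [Module.End.mul_apply, Module.End.mul_apply, h1]
  simp only [LinearMap.smul_apply, Module.End.one_apply, Module.End.natCast_apply,
    Module.End.pow_apply, map_smul]
  simp [smul_eq_mul]
  ring

lemma key (k n : ℕ) :
    iteratedDeriv n (fun z : ℂ => (z-1)^k * Complex.exp ((k:ℂ)*z)) 0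
      = ∑ j ∈ range (n+1),
          (n.choose j : ℂ) * (k:ℂ)^(n-j) * ((k.descFactorial j : ℂ) * (-1:ℂ)^(k-j)) := by
  have h1 : (fun z : ℂ => (z-1)^k * Complex.exp ((k:ℂ)*z))
      = fun z => (((X - C 1 : ℂ[X]))^k).eval z * Complex.exp ((k:ℂ)*z) := by
    funext z; simp
  rw [h1, iteratedDeriv_polyexp]
  simp only [funext_iff] at *
  rw [Lop_pow_eval0, mul_zero, Complex.exp_zero, mul_one]
  refine Finset.sum_congr rfl fun j hj => ?_
  rw [Polynomial.iterate_derivative_X_sub_pow]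
  simp [smul_eq_mul]

lemma contDiff_term (k : ℕ) {n : ℕ∞} :
    ContDiff ℂ n (fun z : ℂ => (z-1)^k * Complex.exp ((k:ℂ)*z)) := by
  exact ((contDiff_id.sub contDiff_const).pow k).mul
    (Complex.contDiff_exp.comp (contDiff_const.mul contDiff_id))

lemma myIteratedDeriv_add {n : ℕ} {f g : ℂ → ℂ} (hf : ContDiff ℂ n f) (hg : ContDiff ℂ n g)
    (x : ℂ) :
    iteratedDeriv n (fun z => f z + g z) x = iteratedDeriv n f x + iteratedDeriv n g x := by
  simp only [← iteratedDerivWithin_univ]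
  exact iteratedDerivWithin_add (Set.mem_univ x) uniqueDiffOn_univ
    hf.contDiffWithinAt hg.contDiffWithinAt

lemma myIteratedDeriv_const_mul {n : ℕ} (a : ℂ) {f : ℂ → ℂ} (hf : ContDiff ℂ n f) (x : ℂ) :
    iteratedDeriv n (fun z => a * f z) x = a * iteratedDeriv n f x := by
  simp only [← iteratedDerivWithin_univ]
  exact iteratedDerivWithin_const_mul (Set.mem_univ x) uniqueDiffOn_univ a hf.contDiffWithinAt

lemma iteratedDeriv_zero_fun {n : ℕ} (x : ℂ) : iteratedDeriv n (fun _ : ℂ => (0:ℂ)) x = 0 := by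
  induction n generalizing x with
  | zero => simp
  | succ n ih =>
    rw [iteratedDeriv_succ']
    simpa using ih x

lemma myIteratedDeriv_sum {ι : Type*} {n : ℕ} (s : Finset ι) (F : ι → ℂ → ℂ)
    (h : ∀ i ∈ s, ContDiff ℂ n (F i)) (x : ℂ) :
    iteratedDeriv n (fun z => ∑ i ∈ s, F i z) x = ∑ i ∈ s, iteratedDeriv n (F i) x := by
  induction s using Finset.cons_induction with
  | empty => simpa using iteratedDeriv_zero_fun x
  | cons i s his ih =>
    rw [Finset.sum_cons]
    have := myIteratedDeriv_add (h i (Finset.mem_cons_self i s))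
      (ContDiff.sum (fun j hj => h j (Finset.mem_cons_of_mem hj))) x
    simp only [Finset.sum_cons] at *
    rw [← ih (fun j hj => h j (Finset.mem_cons_of_mem hj))]
    simpa using this

lemma fun_rewrite (c : ℕ) :
    (fun z : ℂ => z + ∑ m ∈ Finset.Icc 1 c,
        (1 + (z - 1) * Complex.exp z) ^ m / (m : ℂ))
    = fun z : ℂ => z + ∑ m ∈ Finset.Icc 1 c, ∑ k ∈ range (m+1),
        ((m.choose k : ℂ) / m) * ((z-1)^k * Complex.exp ((k:ℂ)*z)) := by
  funext z
  congr 1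
  refine Finset.sum_congr rfl fun m hm => ?_
  rw [add_comm (1:ℂ), add_pow, Finset.sum_div]
  refine Finset.sum_congr rfl fun k hk => ?_
  rw [mul_pow, one_pow, mul_one, Complex.exp_nat_mul]
  ring

lemma idpart (n : ℕ) :
    iteratedDeriv n (fun z : ℂ => z) 0 = if n = 1 then 1 else 0 := by
  match n with
  | 0 => simp
  | 1 => simp [iteratedDeriv_one]
  | (n+2) =>
    rw [iteratedDeriv_succ']
    have : (deriv fun z : ℂ => z) = fun _ : ℂ => (1:ℂ) := by
      funext z; simp
    rw [this, iteratedDeriv_succ']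
    have : (deriv fun _ : ℂ => (1:ℂ)) = fun _ : ℂ => (0:ℂ) := by
      funext z; simp
    rw [this]
    induction n with
    | zero => simp
    | succ n ih =>
      rw [iteratedDeriv_succ']
      simpa using ih

lemma formula (c n : ℕ) :
    iteratedDeriv n
        (fun z : ℂ => z + ∑ m ∈ Finset.Icc 1 c,
          (1 + (z - 1) * Complex.exp z) ^ m / (m : ℂ)) 0
      = (if n = 1 then 1 else 0)
        + ∑ m ∈ Finset.Icc 1 c, ∑ k ∈ range (m+1), ((m.choose k : ℂ) / m) *
            ∑ j ∈ range (n+1),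
              (n.choose j : ℂ) * (k:ℂ)^(n-j) * ((k.descFactorial j : ℂ) * (-1:ℂ)^(k-j)) := by
  rw [fun_rewrite]
  have hsum : ∀ m ∈ Finset.Icc 1 c, ContDiff ℂ n (fun z : ℂ => ∑ k ∈ range (m+1),
      ((m.choose k : ℂ) / m) * ((z-1)^k * Complex.exp ((k:ℂ)*z))) :=
    fun m _ => ContDiff.sum fun k _ => contDiff_const.mul (contDiff_term k)
  rw [myIteratedDeriv_add (f := fun z : ℂ => z) contDiff_id (ContDiff.sum hsum) 0,
    myIteratedDeriv_sum _ _ hsum 0, idpart]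
  congr 1
  refine Finset.sum_congr rfl fun m hm => ?_
  rw [myIteratedDeriv_sum _ _ (fun k _ => contDiff_const.mul (contDiff_term k)) 0]
  refine Finset.sum_congr rfl fun k hk => ?_
  rw [myIteratedDeriv_const_mul _ (contDiff_term k) 0, key]

lemma const_div_nat_tendsto (a : ℂ) : Tendsto (fun n : ℕ => a / n) atTop (nhds 0) := by
  refine squeeze_zero_norm (fun n => ?_) (tendsto_const_div_atTop_nhds_zero_nat ‖a‖)
  simp [norm_div]

lemma desc_over_pow_tendsto (c : ℕ) :
    Tendsto (fun n : ℕ => (n.descFactorial c : ℂ) / (n:ℂ)^c) atTop (nhds 1) := by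
  have heq : ∀ᶠ n : ℕ in atTop, (n.descFactorial c : ℂ) / (n:ℂ)^c
      = ∏ i ∈ range c, (1 - (i:ℂ)/n) := by
    filter_upwards [eventually_ge_atTop (c+1)] with n hn
    have hn0 : (n:ℂ) ≠ 0 := Nat.cast_ne_zero.mpr (by omega)
    rw [Nat.descFactorial_eq_prod_range]
    push_cast
    have hpow : ((n:ℂ))^c = ∏ _i ∈ range c, (n:ℂ) := by simp
    rw [hpow, ← Finset.prod_div_distrib]
    refine Finset.prod_congr rfl fun i hi => ?_
    have : ((n - i : ℕ) : ℂ) = (n:ℂ) - i :=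
      Nat.cast_sub (le_trans (le_of_lt (mem_range.mp hi)) (by omega))
    rw [this]
    field_simp
  apply Tendsto.congr' (EventuallyEq.symm heq)
  have h1 : (1:ℂ) = ∏ i ∈ range c, (1:ℂ) := by simp
  rw [h1]
  apply tendsto_finset_prod
  intro i _
  simpa using (const_div_nat_tendsto (i:ℂ)).const_sub 1

lemma denom_eq (c : ℕ) (hc : 1 ≤ c) {n : ℕ} (hn : c + 1 ≤ n) :
    (c : ℂ) ^ ((n : ℤ) - (c : ℤ) - 1) = (c:ℂ) ^ (n - (c+1) : ℕ) := by
  have : ((n : ℤ) - (c : ℤ) - 1) = ((n - (c+1) : ℕ) : ℤ) := by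
    omega
  rw [this, zpow_natCast]

lemma norm_denom (c : ℕ) (hc : 1 ≤ c) {n : ℕ} (hn : c + 1 ≤ n) :
    ‖(c : ℂ) ^ ((n : ℤ) - (c : ℤ) - 1) * (n : ℂ) ^ c‖
      = (c:ℝ) ^ (n - (c+1) : ℕ) * (n:ℝ)^c := by
  rw [denom_eq c hc hn]
  rw [norm_mul, norm_pow, norm_pow, Complex.norm_natCast, Complex.norm_natCast]

lemma term_tendsto (c : ℕ) (hc : 1 ≤ c) (m k j : ℕ) (hm1 : 1 ≤ m) (hmc : m ≤ c)
    (hk : k ≤ c) (hj : j ≤ c) :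
    Tendsto (fun n : ℕ =>
      ((m.choose k : ℂ)/m) * ((n.choose j : ℂ) * (k:ℂ)^(n-j)
          * ((k.descFactorial j : ℂ) * (-1:ℂ)^(k-j)))
        / ((c : ℂ) ^ ((n : ℤ) - (c : ℤ) - 1) * (n : ℂ) ^ c)) atTop
      (nhds ((if m = c then (1:ℂ) else 0) * (if k = c then 1 else 0)
        * (if j = c then 1 else 0))) := by
  have hc0 : (c:ℂ) ≠ 0 := Nat.cast_ne_zero.mpr (by omega)
  have hc0' : (c:ℝ) ≠ 0 := Nat.cast_ne_zero.mpr (by omega)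
  by_cases hkm : m < k
  · have h0 : (m.choose k : ℂ) = 0 := by
      rw [Nat.choose_eq_zero_of_lt hkm]; simp
    rw [if_neg (by omega : ¬ m = c)]
    simp only [h0, zero_div, zero_mul]
    simpa using tendsto_const_nhds
  by_cases hjk : k < j
  · have h0 : (k.descFactorial j : ℂ) = 0 := by
      rw [Nat.descFactorial_eq_zero_iff_lt.mpr hjk]; simp
    rw [if_neg (by omega : ¬ k = c)]
    simp only [h0, zero_mul, mul_zero, zero_div]
    simpa using tendsto_const_nhds
  push_neg at hkm hjk
  by_cases hkc : k = c
  · -- then m = c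
    have hmceq : m = c := le_antisymm hmc (hkc ▸ hkm)
    subst hkc hmceq
    by_cases hjc : j = m
    · rw [hjc]
      rw [show (((if m = m then (1:ℂ) else 0) * if m = m then 1 else 0) * if m = m then 1 else 0) = 1 by simp]
      apply Tendsto.congr' _ (desc_over_pow_tendsto m)
      filter_upwards [eventually_ge_atTop (m+1)] with n hn
      have hn0 : (n:ℂ) ≠ 0 := Nat.cast_ne_zero.mpr (by omega)
      rw [denom_eq m hc hn]
      have hdesc : (n.descFactorial m : ℂ) = (m.factorial : ℂ) * (n.choose m : ℂ) := by
        exact_mod_cast congrArg (Nat.cast : ℕ → ℂ) (Nat.descFactorial_eq_factorial_mul_choose n m)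
      have hpow : (m:ℂ)^(n-m) = (m:ℂ)^(n-(m+1)) * m := by
        rw [← pow_succ]; congr 1; omega
      rw [Nat.choose_self, Nat.descFactorial_self, Nat.sub_self, pow_zero, hdesc, hpow]
      push_cast
      field_simp
    · -- k = m = c, j < c : polynomial decay
      have hjc' : j < m := by omega
      rw [show (((if m = m then (1:ℂ) else 0) * if m = m then 1 else 0) * if j = m then 1 else 0) = 0 by simp [hjc]]
      set A : ℝ := ‖((m.choose m : ℂ)/m) * ((m.descFactorial j : ℂ) * (-1:ℂ)^(m-j))‖ with hA
      apply squeeze_zero_norm' (a := fun n : ℕ => (A * (m:ℝ)^(m+1)) / n)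
      · filter_upwards [eventually_ge_atTop (m+1)] with n hn
        have hn1 : (1:ℝ) ≤ (n:ℝ) := by exact_mod_cast (by omega : 1 ≤ n)
        have hnorm : ‖((m.choose m : ℂ)/m) * ((n.choose j : ℂ) * (m:ℂ)^(n-j)
              * ((m.descFactorial j : ℂ) * (-1:ℂ)^(m-j)))
            / ((m : ℂ) ^ ((n : ℤ) - (m : ℤ) - 1) * (n : ℂ) ^ m)‖
            = A * ((n.choose j : ℝ) * (m:ℝ)^(n-j)) / ((m:ℝ)^(n-(m+1)) * (n:ℝ)^m) := by
          rw [norm_div, norm_denom m hc hn, hA]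
          simp only [norm_mul, norm_div, norm_pow, Complex.norm_natCast, norm_neg, norm_one,
            one_pow, mul_one]
          ring
        rw [hnorm]
        have hcpow : (m:ℝ)^(n-j) = (m:ℝ)^(n-(m+1)) * (m:ℝ)^((m+1)-j) := by
          rw [← pow_add]; congr 1; omega
        have hchoose : (n.choose j : ℝ) ≤ (n:ℝ)^j := by
          exact_mod_cast Nat.choose_le_pow n j
        have hnpow : (n:ℝ)^j * (n:ℝ) ≤ (n:ℝ)^m := by
          rw [← pow_succ]
          exact pow_le_pow_right₀ hn1 (by omega)
        have hA0 : 0 ≤ A := hA ▸ norm_nonneg _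
        have hm1R : (1:ℝ) ≤ (m:ℝ) := by exact_mod_cast hm1
        have hmpos : (0:ℝ) < (m:ℝ) := by linarith
        have hnpos : (0:ℝ) < (n:ℝ) := by linarith
        rw [hcpow]
        calc A * ((n.choose j : ℝ) * ((m:ℝ)^(n-(m+1)) * (m:ℝ)^((m+1)-j)))
              / ((m:ℝ)^(n-(m+1)) * (n:ℝ)^m)
            = A * ((n.choose j:ℝ) * (m:ℝ)^((m+1)-j)) / (n:ℝ)^m := by
              rw [div_eq_div_iff (by positivity) (by positivity)]
              ring
          _ ≤ A * ((n:ℝ)^j * (m:ℝ)^(m+1)) / (n:ℝ)^m := by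
              gcongr <;>
                first
                  | exact hchoose
                  | exact pow_le_pow_right₀ hm1R (by omega)
                  | exact hA0
                  | exact Nat.cast_nonneg _
                  | omega
                  | exact hm1R
                  | positivity
          _ ≤ A * (m:ℝ)^(m+1) / n := by
              rw [div_le_div_iff₀ (by positivity) hnpos]
              calc A * ((n:ℝ)^j * (m:ℝ)^(m+1)) * n
                  = (A * (m:ℝ)^(m+1)) * ((n:ℝ)^j * n) := by ring
                _ ≤ (A * (m:ℝ)^(m+1)) * (n:ℝ)^m := by
                    exact mul_le_mul_of_nonneg_left hnpow (by positivity)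
                _ = A * (m:ℝ)^(m+1) * (n:ℝ)^m := by ring
      · exact tendsto_const_div_atTop_nhds_zero_nat _
  · -- k < c
    have hkc' : k < c := by omega
    rw [show (((if m = c then (1:ℂ) else 0) * if k = c then 1 else 0) * if j = c then 1 else 0)
        = 0 by simp [hkc]]
    by_cases hk0 : k = 0
    · subst hk0
      have hj0 : j = 0 := by omega
      subst hj0
      apply Tendsto.congr' _ tendsto_const_nhds
      filter_upwards [eventually_ge_atTop 1] with n hn
      simp [zero_pow (show n ≠ 0 by omega)]
    · have hk1 : 1 ≤ k := by omega
      set A : ℝ := ‖((m.choose k : ℂ)/m) * ((k.descFactorial j : ℂ) * (-1:ℂ)^(k-j))‖ with hA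
      have hA0 : 0 ≤ A := hA ▸ norm_nonneg _
      set r : ℝ := (k:ℝ)/c with hr
      have hcpos : (0:ℝ) < (c:ℝ) := by exact_mod_cast (by omega : 0 < c)
      have hr0 : 0 ≤ r := by positivity
      have hr1 : r < 1 := by
        rw [hr, div_lt_one hcpos]
        exact_mod_cast hkc'
      apply squeeze_zero_norm' (a := fun n : ℕ => (A * (c:ℝ)^(c+1)) * ((n:ℝ)^j * r^n))
      · filter_upwards [eventually_ge_atTop (c+1)] with n hn
        have hn1 : (1:ℝ) ≤ (n:ℝ) := by exact_mod_cast (by omega : 1 ≤ n)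
        have hnpos : (0:ℝ) < (n:ℝ) := by linarith
        have hnorm : ‖((m.choose k : ℂ)/m) * ((n.choose j : ℂ) * (k:ℂ)^(n-j)
              * ((k.descFactorial j : ℂ) * (-1:ℂ)^(k-j)))
            / ((c : ℂ) ^ ((n : ℤ) - (c : ℤ) - 1) * (n : ℂ) ^ c)‖
            = A * ((n.choose j : ℝ) * (k:ℝ)^(n-j)) / ((c:ℝ)^(n-(c+1)) * (n:ℝ)^c) := by
          rw [norm_div, norm_denom c hc hn, hA]
          simp only [norm_mul, norm_div, norm_pow, Complex.norm_natCast, norm_neg, norm_one,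
            one_pow, mul_one]
          ring
        rw [hnorm]
        have hchoose : (n.choose j : ℝ) ≤ (n:ℝ)^j := by
          exact_mod_cast Nat.choose_le_pow n j
        have hkpow : (k:ℝ)^(n-j) ≤ (k:ℝ)^n :=
          pow_le_pow_right₀ (by exact_mod_cast hk1) (by omega)
        have hcsplit : (c:ℝ)^(n-(c+1)) = (c:ℝ)^n / (c:ℝ)^(c+1) := by
          rw [eq_div_iff (pow_ne_zero _ hc0'), ← pow_add]
          congr 1
          omega
        calc A * ((n.choose j : ℝ) * (k:ℝ)^(n-j)) / ((c:ℝ)^(n-(c+1)) * (n:ℝ)^c)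
            ≤ A * ((n:ℝ)^j * (k:ℝ)^n) / ((c:ℝ)^(n-(c+1)) * (n:ℝ)^c) := by
              gcongr
          _ = (A * (c:ℝ)^(c+1)) * (((n:ℝ)^j * ((k:ℝ)^n/(c:ℝ)^n)) / (n:ℝ)^c) := by
              rw [hcsplit]
              field_simp
          _ ≤ (A * (c:ℝ)^(c+1)) * ((n:ℝ)^j * ((k:ℝ)^n/(c:ℝ)^n)) := by
              apply mul_le_mul_of_nonneg_left _ (by positivity)
              exact div_le_self (by positivity) (one_le_pow₀ hn1)
          _ = (A * (c:ℝ)^(c+1)) * ((n:ℝ)^j * r^n) := by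
              rw [hr, div_pow]
      · rw [show (0:ℝ) = (A * (c:ℝ)^(c+1)) * 0 by ring]
        apply Tendsto.const_mul
        exact (summable_pow_mul_geometric_of_norm_lt_one j
          (r := r) (by rwa [Real.norm_eq_abs, abs_of_nonneg hr0])).tendsto_atTop_zero

/-- Let `f(z) = z + ∑_{m=1}^{c} (1 + (z-1)e^z)^m/m`.  Then `f` is entire and
its Taylor coefficients `a_n` satisfy `n!·a_n ~ c^{n-c-1} n^c` as `n → ∞`
(note `n!·a_n = f^{(n)}(0)`). -/
theorem NcA_complexity_coefficient_asymptotic (c : ℕ) (hc : 1 ≤ c) :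
    Differentiable ℂ
      (fun z : ℂ => z + ∑ m ∈ Finset.Icc 1 c,
        (1 + (z - 1) * Complex.exp z) ^ m / (m : ℂ)) ∧
    Tendsto
      (fun n : ℕ =>
        iteratedDeriv n
            (fun z : ℂ => z + ∑ m ∈ Finset.Icc 1 c,
              (1 + (z - 1) * Complex.exp z) ^ m / (m : ℂ)) 0 /
          ((c : ℂ) ^ ((n : ℤ) - (c : ℤ) - 1) * (n : ℂ) ^ c))
      atTop (nhds 1) := by
  constructor
  · apply Differentiable.add differentiable_id
    apply Differentiable.fun_sum
    intro m _
    exact (((differentiable_const _).add ((differentiable_id.sub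
      (differentiable_const _)).mul Complex.differentiable_exp)).pow m).div_const _
  · have heq : ∀ᶠ n : ℕ in atTop,
        iteratedDeriv n
            (fun z : ℂ => z + ∑ m ∈ Finset.Icc 1 c,
              (1 + (z - 1) * Complex.exp z) ^ m / (m : ℂ)) 0 /
          ((c : ℂ) ^ ((n : ℤ) - (c : ℤ) - 1) * (n : ℂ) ^ c)
        = ∑ m ∈ Finset.Icc 1 c, ∑ k ∈ range (c+1), ∑ j ∈ range (c+1),
            ((m.choose k : ℂ)/m) * ((n.choose j : ℂ) * (k:ℂ)^(n-j)
              * ((k.descFactorial j : ℂ) * (-1:ℂ)^(k-j)))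
            / ((c : ℂ) ^ ((n : ℤ) - (c : ℤ) - 1) * (n : ℂ) ^ c) := by
      filter_upwards [eventually_ge_atTop (c+2)] with n hn
      rw [formula, if_neg (by omega : ¬ n = 1), zero_add]
      rw [Finset.sum_div]
      refine Finset.sum_congr rfl fun m hm => ?_
      rw [Finset.mem_Icc] at hm
      have hstep1 : ∑ k ∈ range (m+1), ((m.choose k : ℂ) / m) *
            ∑ j ∈ range (n+1),
              (n.choose j : ℂ) * (k:ℂ)^(n-j) * ((k.descFactorial j : ℂ) * (-1:ℂ)^(k-j))
          = ∑ k ∈ range (c+1), ((m.choose k : ℂ) / m) *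
            ∑ j ∈ range (n+1),
              (n.choose j : ℂ) * (k:ℂ)^(n-j) * ((k.descFactorial j : ℂ) * (-1:ℂ)^(k-j)) := by
        apply Finset.sum_subset
        · intro x hx
          rw [Finset.mem_range] at *
          omega
        · intro k hk1 hk2
          rw [Finset.mem_range] at *
          have : m.choose k = 0 := Nat.choose_eq_zero_of_lt (by omega)
          rw [this]
          simp
      rw [hstep1, Finset.sum_div]
      refine Finset.sum_congr rfl fun k hk => ?_
      rw [Finset.mem_range] at hk
      have hstep2 : ∑ j ∈ range (n+1),
            (n.choose j : ℂ) * (k:ℂ)^(n-j) * ((k.descFactorial j : ℂ) * (-1:ℂ)^(k-j))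
          = ∑ j ∈ range (c+1),
            (n.choose j : ℂ) * (k:ℂ)^(n-j) * ((k.descFactorial j : ℂ) * (-1:ℂ)^(k-j)) := by
        symm
        apply Finset.sum_subset
        · intro x hx
          rw [Finset.mem_range] at *
          omega
        · intro j hj1 hj2
          rw [Finset.mem_range] at *
          have : k.descFactorial j = 0 := Nat.descFactorial_eq_zero_iff_lt.mpr (by omega)
          rw [this]
          simp
      rw [hstep2, Finset.mul_sum, Finset.sum_div]
    apply Tendsto.congr' (EventuallyEq.symm heq)
    have hlim : (1:ℂ) = ∑ m ∈ Finset.Icc 1 c, ∑ k ∈ range (c+1), ∑ j ∈ range (c+1),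
        ((if m = c then (1:ℂ) else 0) * (if k = c then 1 else 0)
          * (if j = c then 1 else 0)) := by
      simp only [mul_ite, mul_one, mul_zero, ite_mul, one_mul, zero_mul]
      rw [Finset.sum_congr rfl (fun m _ => Finset.sum_congr rfl
        (fun k _ => Finset.sum_ite_eq' (range (c+1)) c _))]
      simp [Finset.mem_range, Finset.mem_Icc, hc]
    have hts : Tendsto (fun n : ℕ => ∑ m ∈ Finset.Icc 1 c, ∑ k ∈ range (c+1),
        ∑ j ∈ range (c+1),
          ((m.choose k : ℂ)/m) * ((n.choose j : ℂ) * (k:ℂ)^(n-j)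
            * ((k.descFactorial j : ℂ) * (-1:ℂ)^(k-j)))
          / ((c : ℂ) ^ ((n : ℤ) - (c : ℤ) - 1) * (n : ℂ) ^ c)) atTop
        (nhds (∑ m ∈ Finset.Icc 1 c, ∑ k ∈ range (c+1), ∑ j ∈ range (c+1),
          ((if m = c then (1:ℂ) else 0) * (if k = c then 1 else 0)
            * (if j = c then 1 else 0)))) := by
      apply tendsto_finset_sum
      intro m hm
      apply tendsto_finset_sum
      intro k hk
      apply tendsto_finset_sum
      intro j hj
      rw [Finset.mem_Icc] at hm
      rw [Finset.mem_range] at hk hj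
      exact term_tendsto c hc m k j hm.1 hm.2 (by omega) (by omega)
    rwa [← hlim] at hts
end

section
/- Let β₁(z) = Σ_{m=1}^{s₁} z^m/m and β_i(z) = β_{i-1}(z) + Σ_{m=1}^{s_i} (1 + (z-1)exp(β_{i-1}(z)))^m/m for 2 ≤ i ≤ q, with integers s_i ≥ 1 and q ≥ 2. Then the entire function f = β_q satisfies lim_{r→∞} ln^{(q-1)}(M_f(r)) / r^{s₁} = s₂/s₁, where M_f(r) = max_{|z|=r} |f(z)| and ln^{(j)} is the j-fold iterated logarithm. -/
noncomputable section

open Filter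

/-- The recursively defined functions
`β₁(z) = ∑_{m=1}^{s₁} z^m/m`,
`β_i(z) = β_{i-1}(z) + ∑_{m=1}^{s_i} (1 + (z-1)·exp(β_{i-1}(z)))^m/m`.
Here `polyBeta s 0 = 0` and the recursion gives `polyBeta s i = β_i`
(noting `exp(0) = 1`, so `polyBeta s 1 = ∑_{m=1}^{s 1} z^m/m = β₁`). -/
def polyBeta (s : ℕ → ℕ) : ℕ → ℂ → ℂ
  | 0, _ => 0
  | i + 1, z => polyBeta s i z +
      ∑ m ∈ Finset.Icc 1 (s (i + 1)),
        (1 + (z - 1) * Complex.exp (polyBeta s i z)) ^ m / (m : ℂ)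

/-- The `j`-fold iterated natural logarithm. -/
def iterLog : ℕ → ℝ → ℝ
  | 0, x => x
  | j + 1, x => Real.log (iterLog j x)

/-- The maximum modulus `M_f(r) = max_{|z| = r} |f(z)|`. -/
def maxModulus (f : ℂ → ℂ) (r : ℝ) : ℝ :=
  sSup ((fun z => ‖f z‖) '' Metric.sphere (0 : ℂ) r)

namespace PN

lemma iterLog_succ' (n : ℕ) (x : ℝ) : iterLog (n + 1) x = iterLog n (Real.log x) := by
  induction n with
  | zero => rfl
  | succ n ih =>
    show Real.log (iterLog (n+1) x) = Real.log (iterLog n (Real.log x))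
    rw [ih]

lemma tendsto_iterLog_atTop (n : ℕ) {v : ℝ → ℝ} (hv : Tendsto v atTop atTop) :
    Tendsto (fun r => iterLog n (v r)) atTop atTop := by
  induction n with
  | zero => exact hv
  | succ n ih => exact (Real.tendsto_log_atTop.comp ih).congr (fun r => rfl)

lemma iterLog_mono : ∀ (n : ℕ) {x y : ℝ}, (∀ k < n, 1 ≤ iterLog k x) → x ≤ y →
    iterLog n x ≤ iterLog n y := by
  intro n
  induction n with
  | zero => intro x y _ h; exact h
  | succ n ih =>
    intro x y h1 hxy
    have hx : (1:ℝ) ≤ iterLog n x := h1 n (Nat.lt_succ_self n)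
    have := ih (fun k hk => h1 k (hk.trans (Nat.lt_succ_self n))) hxy
    exact Real.log_le_log (lt_of_lt_of_le one_pos hx) this

/-- If `u/v → c > 0` and `v → ∞` then `log u - log v → log c`, and `u → ∞`. -/
lemma log_sub_log {u v : ℝ → ℝ} {c : ℝ} (hv : Tendsto v atTop atTop) (hc : 0 < c)
    (h : Tendsto (fun r => u r / v r) atTop (nhds c)) :
    Tendsto (fun r => Real.log (u r) - Real.log (v r)) atTop (nhds (Real.log c)) ∧
      Tendsto u atTop atTop := by
  have hu : Tendsto u atTop atTop := by
    have : Tendsto (fun r => (u r / v r) * v r) atTop atTop :=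
      Tendsto.pos_mul_atTop hc h hv
    refine this.congr' ?_
    filter_upwards [hv.eventually_gt_atTop 0] with r hr
    field_simp
  have hev : ∀ᶠ r in atTop, Real.log (u r / v r) = Real.log (u r) - Real.log (v r) := by
    filter_upwards [hv.eventually_gt_atTop 0, hu.eventually_gt_atTop 0] with r h1 h2
    exact Real.log_div (ne_of_gt h2) (ne_of_gt h1)
  refine ⟨?_, hu⟩
  have : Tendsto (fun r => Real.log (u r / v r)) atTop (nhds (Real.log c)) :=
    (Real.continuousAt_log (ne_of_gt hc)).tendsto.comp h
  exact this.congr' hev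

/-- Transfer lemma: if `u/v → c > 0` and `v → ∞`, then for any `n ≥ 1`
`iterLog n u - iterLog n v` converges. -/
lemma exists_iterLog_sub {u v : ℝ → ℝ} {c : ℝ} (hv : Tendsto v atTop atTop) (hc : 0 < c)
    (h : Tendsto (fun r => u r / v r) atTop (nhds c)) :
    ∀ n : ℕ, 1 ≤ n → ∃ L, Tendsto (fun r => iterLog n (u r) - iterLog n (v r)) atTop (nhds L) := by
  -- strengthen: diff converges AND iterLog n v → ∞ AND ratio → 1 for next step
  suffices H : ∀ n : ℕ, ∃ L, (Tendsto (fun r => iterLog (n+1) (u r) - iterLog (n+1) (v r)) atTop (nhds L)) by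
    intro n hn
    obtain ⟨m, rfl⟩ := Nat.exists_eq_add_of_le hn
    simpa [Nat.add_comm] using H m
  intro n
  induction n with
  | zero =>
    exact ⟨Real.log c, (log_sub_log hv hc h).1⟩
  | succ n ih =>
    obtain ⟨L, hL⟩ := ih
    have hvn : Tendsto (fun r => iterLog (n+1) (v r)) atTop atTop := tendsto_iterLog_atTop _ hv
    have hratio : Tendsto (fun r => iterLog (n+1) (u r) / iterLog (n+1) (v r)) atTop (nhds 1) := by
      have h1 : Tendsto (fun r => (iterLog (n+1) (u r) - iterLog (n+1) (v r)) / iterLog (n+1) (v r))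
          atTop (nhds 0) := by
        simpa using hL.div_atTop hvn
      have h2 : Tendsto (fun r => (iterLog (n+1) (u r) - iterLog (n+1) (v r)) / iterLog (n+1) (v r) + 1)
          atTop (nhds (0 + 1)) := h1.add tendsto_const_nhds
      rw [zero_add] at h2
      refine h2.congr' ?_
      filter_upwards [hvn.eventually_gt_atTop 0] with r hr
      field_simp
      ring
    refine ⟨Real.log 1, ?_⟩
    exact (log_sub_log hvn one_pos hratio).1

end PN
namespace PN

/-- Real-valued analogue/majorant of `polyBeta`: `a = -1` gives the real restriction,
`a = 1` gives an upper bound for the modulus. -/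
def bb (a : ℝ) (s : ℕ → ℕ) : ℕ → ℝ → ℝ
  | 0, _ => 0
  | i + 1, r => bb a s i r +
      ∑ m ∈ Finset.Icc 1 (s (i + 1)), (1 + (r + a) * Real.exp (bb a s i r)) ^ m / (m : ℝ)

variable {a : ℝ} {s : ℕ → ℕ}

lemma bb_nonneg (ha : -1 ≤ a) : ∀ (i : ℕ) {r : ℝ}, 1 ≤ r → 0 ≤ bb a s i r := by
  intro i
  induction i with
  | zero => intro r _; exact le_refl 0
  | succ i ih =>
    intro r hr
    have h0 : (0:ℝ) ≤ r + a := by linarith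
    refine add_nonneg (ih hr) (Finset.sum_nonneg fun m _ => ?_)
    have ht : (0:ℝ) ≤ 1 + (r + a) * Real.exp (bb a s i r) :=
      add_nonneg zero_le_one (mul_nonneg h0 (Real.exp_pos _).le)
    exact div_nonneg (pow_nonneg ht m) (Nat.cast_nonneg m)

lemma bb_le_succ (ha : -1 ≤ a) (i : ℕ) {r : ℝ} (hr : 1 ≤ r) :
    bb a s i r ≤ bb a s (i + 1) r := by
  have h0 : (0:ℝ) ≤ r + a := by linarith
  have : (0:ℝ) ≤ ∑ m ∈ Finset.Icc 1 (s (i + 1)),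
      (1 + (r + a) * Real.exp (bb a s i r)) ^ m / (m : ℝ) := by
    refine Finset.sum_nonneg fun m _ => ?_
    have ht : (0:ℝ) ≤ 1 + (r + a) * Real.exp (bb a s i r) :=
      add_nonneg zero_le_one (mul_nonneg h0 (Real.exp_pos _).le)
    exact div_nonneg (pow_nonneg ht m) (Nat.cast_nonneg m)
  show bb a s i r ≤ bb a s i r + _
  linarith

lemma bb_one_eq (r : ℝ) : bb a s 1 r = ∑ m ∈ Finset.Icc 1 (s 1), (r + (1 + a)) ^ m / (m : ℝ) := by
  show (0:ℝ) + _ = _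
  rw [zero_add]
  congr 1
  funext m
  rw [show bb a s 0 r = 0 from rfl, Real.exp_zero, mul_one]
  ring_nf

lemma bb_one_lower (ha : -1 ≤ a) (hs1 : 1 ≤ s 1) {r : ℝ} (hr : 1 ≤ r) :
    r ^ (s 1) / (s 1 : ℝ) ≤ bb a s 1 r := by
  rw [bb_one_eq]
  have hmem : s 1 ∈ Finset.Icc 1 (s 1) := Finset.mem_Icc.2 ⟨hs1, le_refl _⟩
  have hra : r ≤ r + (1 + a) := by linarith
  have h0 : (0:ℝ) ≤ r := by linarith
  have hs1' : (0:ℝ) < (s 1 : ℝ) := by exact_mod_cast Nat.lt_of_lt_of_le Nat.zero_lt_one hs1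
  calc r ^ (s 1) / (s 1 : ℝ) ≤ (r + (1 + a)) ^ (s 1) / (s 1 : ℝ) := by
        exact (div_le_div_iff_of_pos_right hs1').2 (pow_le_pow_left₀ h0 hra _)
    _ ≤ _ := by
        have h0' : (0:ℝ) ≤ r + (1 + a) := by linarith
        exact Finset.single_le_sum
          (fun (m : ℕ) (_ : m ∈ Finset.Icc 1 (s 1)) =>
            div_nonneg (pow_nonneg h0' m) (Nat.cast_nonneg m)) hmem

lemma bb_lower (ha : -1 ≤ a) (hs1 : 1 ≤ s 1) :
    ∀ (i : ℕ), 1 ≤ i → ∀ {r : ℝ}, 1 ≤ r → r ^ (s 1) / (s 1 : ℝ) ≤ bb a s i r := by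
  intro i
  induction i with
  | zero => intro h; exact absurd h (by norm_num)
  | succ i ih =>
    intro _ r hr
    rcases Nat.eq_zero_or_pos i with h | h
    · subst h; exact bb_one_lower ha hs1 hr
    · exact le_trans (ih h hr) (bb_le_succ ha i hr)

lemma bb_tendsto (ha : -1 ≤ a) (hs1 : 1 ≤ s 1) {i : ℕ} (hi : 1 ≤ i) :
    Tendsto (bb a s i) atTop atTop := by
  have h1 : Tendsto (fun r : ℝ => r ^ (s 1) / (s 1 : ℝ)) atTop atTop :=
    (tendsto_pow_atTop (Nat.one_le_iff_ne_zero.1 hs1)).atTop_div_const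
      (by exact_mod_cast Nat.lt_of_lt_of_le Nat.zero_lt_one hs1)
  refine tendsto_atTop_mono' atTop ?_ h1
  filter_upwards [eventually_ge_atTop (1:ℝ)] with r hr
  exact bb_lower ha hs1 i hi hr

end PN
namespace PN

lemma aux_ratio_one (c : ℝ) : Tendsto (fun r : ℝ => (r + c) / r) atTop (nhds 1) := by
  have h : Tendsto (fun r : ℝ => 1 + c * r⁻¹) atTop (nhds (1 + c * 0)) :=
    tendsto_const_nhds.add (tendsto_const_nhds.mul tendsto_inv_atTop_zero)
  rw [mul_zero, add_zero] at h
  refine h.congr' ?_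
  filter_upwards [eventually_gt_atTop (0:ℝ)] with r hr
  field_simp

lemma aux_pow_div (c : ℝ) (m k : ℕ) (hmk : m ≤ k) :
    Tendsto (fun r : ℝ => (r + c) ^ m / r ^ k) atTop (nhds (if m = k then 1 else 0)) := by
  have h1 : Tendsto (fun r : ℝ => ((r + c) / r) ^ m) atTop (nhds 1) := by
    simpa using (aux_ratio_one c).pow m
  have h2 : Tendsto (fun r : ℝ => r ^ m / r ^ k) atTop (nhds (if m = k then 1 else 0)) := by
    rcases eq_or_lt_of_le hmk with h | h
    · subst h
      rw [if_pos rfl]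
      refine tendsto_const_nhds.congr' ?_
      filter_upwards [eventually_gt_atTop (0:ℝ)] with r hr
      rw [div_self (pow_ne_zero _ (ne_of_gt hr))]
    · rw [if_neg (ne_of_lt h)]
      have h3 : Tendsto (fun r : ℝ => (r⁻¹) ^ (k - m)) atTop (nhds 0) := by
        have h4 := (tendsto_inv_atTop_zero (𝕜 := ℝ)).pow (k - m)
        rwa [zero_pow (Nat.sub_ne_zero_of_lt h)] at h4
      refine h3.congr' ?_
      filter_upwards [eventually_gt_atTop (0:ℝ)] with r hr
      have hk : r ^ k = r ^ m * r ^ (k - m) := by rw [← pow_add]; congr 1; omega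
      rw [inv_pow, eq_comm, div_eq_iff (pow_ne_zero _ (ne_of_gt hr)), hk,
        mul_comm (r ^ m), ← mul_assoc, inv_mul_cancel₀ (pow_ne_zero _ (ne_of_gt hr)), one_mul]
  have h5 := h1.mul h2
  rw [one_mul] at h5
  refine h5.congr' ?_
  filter_upwards [eventually_gt_atTop (0:ℝ)] with r hr
  rw [div_pow]
  field_simp

lemma bb_one_asymp {a : ℝ} {s : ℕ → ℕ} (hs1 : 1 ≤ s 1) :
    Tendsto (fun r => bb a s 1 r / r ^ (s 1)) atTop (nhds (1 / (s 1 : ℝ))) := by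
  have key : ∀ m : ℕ, m ∈ Finset.Icc 1 (s 1) →
      Tendsto (fun r : ℝ => ((r + (1 + a)) ^ m / (m : ℝ)) / r ^ (s 1)) atTop
        (nhds (if m = s 1 then 1 / (s 1 : ℝ) else 0)) := by
    intro m hm
    rw [Finset.mem_Icc] at hm
    have := (aux_pow_div (1 + a) m (s 1) hm.2).div_const (m : ℝ)
    rcases eq_or_ne m (s 1) with h | h
    · subst h
      rw [if_pos rfl] at this ⊢
      exact this.congr (fun r => by rw [div_div, div_div, mul_comm])
    · rw [if_neg h] at this ⊢
      rw [show (0:ℝ)/(m:ℝ) = 0 from zero_div _] at this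
      exact this.congr (fun r => by rw [div_div, div_div, mul_comm])
  have hsum := tendsto_finset_sum (Finset.Icc 1 (s 1)) key
  have hval : (∑ m ∈ Finset.Icc 1 (s 1), (if m = s 1 then 1 / (s 1 : ℝ) else 0)) = 1 / (s 1 : ℝ) := by
    rw [Finset.sum_ite_eq' (Finset.Icc 1 (s 1)) (s 1) (fun _ => 1 / (s 1 : ℝ))]
    rw [if_pos (Finset.mem_Icc.2 ⟨hs1, le_refl _⟩)]
  rw [hval] at hsum
  refine hsum.congr (fun r => ?_)
  rw [bb_one_eq, Finset.sum_div]

lemma log_add_div_tendsto (c : ℝ) : Tendsto (fun r : ℝ => Real.log (r + c) / r) atTop (nhds 0) := by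
  have h0 : Tendsto (fun x : ℝ => Real.log x / x) atTop (nhds 0) :=
    Real.isLittleO_log_id_atTop.tendsto_div_nhds_zero
  have h1 : Tendsto (fun r : ℝ => Real.log (r + c) / (r + c)) atTop (nhds 0) :=
    h0.comp (tendsto_atTop_add_const_right atTop c tendsto_id)
  have h2 := h1.mul (aux_ratio_one c)
  rw [zero_mul] at h2
  refine h2.congr' ?_
  filter_upwards [eventually_gt_atTop (0:ℝ), eventually_gt_atTop (-c)] with r hr hrc
  have : r + c ≠ 0 := by linarith
  field_simp

end PN
namespace PN

variable {a : ℝ} {s : ℕ → ℕ}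

lemma bb_log_ratio (ha : -1 ≤ a) (ha' : a ≤ 1) (hs1 : 1 ≤ s 1) {i : ℕ} (hi : 1 ≤ i)
    (hsi : 1 ≤ s (i + 1)) :
    Tendsto (fun r => Real.log (bb a s (i + 1) r) / bb a s i r) atTop
      (nhds ((s (i + 1) : ℝ))) := by
  set p : ℕ := s (i + 1) with hp
  have hp1 : (1:ℝ) ≤ (p:ℝ) := by exact_mod_cast hsi
  have hp0 : (0:ℝ) < (p:ℝ) := lt_of_lt_of_le one_pos hp1
  have hs1R : (0:ℝ) < (s 1 : ℝ) := by exact_mod_cast Nat.lt_of_lt_of_le Nat.zero_lt_one hs1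
  set g : ℝ → ℝ := bb a s i with hg
  have hgt : Tendsto g atTop atTop := bb_tendsto ha hs1 hi
  -- the two-sided bound on log (bb (i+1))
  have hbound : ∀ᶠ r in atTop,
      ((p:ℝ) * g r - Real.log p ≤ Real.log (bb a s (i + 1) r)) ∧
      (Real.log (bb a s (i + 1) r) ≤ (p:ℝ) * g r + Real.log (1 + p * (r + 2) ^ p)) := by
    filter_upwards [eventually_ge_atTop (2:ℝ)] with r hr
    have hr1 : (1:ℝ) ≤ r := by linarith
    have hg0 : 0 ≤ g r := bb_nonneg ha i hr1
    set t : ℝ := 1 + (r + a) * Real.exp (g r) with htdef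
    have hexp_pos : (0:ℝ) < Real.exp (g r) := Real.exp_pos _
    have hone_le_exp : (1:ℝ) ≤ Real.exp (g r) := by
      rw [show (1:ℝ) = Real.exp 0 from (Real.exp_zero).symm]
      exact Real.exp_le_exp.2 hg0
    have ht1 : (1:ℝ) ≤ t := by
      have : (0:ℝ) ≤ (r + a) * Real.exp (g r) := mul_nonneg (by linarith) hexp_pos.le
      linarith
    have ht0 : (0:ℝ) ≤ t := by linarith
    -- lower estimate for t
    have htlow : Real.exp (g r) ≤ t := by
      have h1 : (1:ℝ) * Real.exp (g r) ≤ (r + a) * Real.exp (g r) :=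
        mul_le_mul_of_nonneg_right (by linarith) hexp_pos.le
      rw [one_mul] at h1
      linarith
    -- upper estimate for t
    have htup : t ≤ (r + 2) * Real.exp (g r) := by
      have h1 : (r + a) * Real.exp (g r) ≤ (r + 1) * Real.exp (g r) :=
        mul_le_mul_of_nonneg_right (by linarith) hexp_pos.le
      have : (r + 2) * Real.exp (g r) = Real.exp (g r) + (r + 1) * Real.exp (g r) := by ring
      rw [this]
      linarith
    have hmem : p ∈ Finset.Icc 1 p := Finset.mem_Icc.2 ⟨hsi, le_refl _⟩
    -- lower bound for bb (i+1)
    have hlow_bb : Real.exp ((p:ℝ) * g r) / p ≤ bb a s (i + 1) r := by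
      have h1 : Real.exp ((p:ℝ) * g r) = Real.exp (g r) ^ p := by
        rw [← Real.exp_nat_mul]
      have h2 : Real.exp (g r) ^ p ≤ t ^ p := pow_le_pow_left₀ hexp_pos.le htlow p
      have h3 : t ^ p / (p:ℝ) ≤ ∑ m ∈ Finset.Icc 1 p, t ^ m / (m : ℝ) := by
        refine Finset.single_le_sum
          (fun (m : ℕ) (_ : m ∈ Finset.Icc 1 p) =>
            div_nonneg (pow_nonneg ht0 m) (Nat.cast_nonneg m)) hmem
      have h4 : Real.exp ((p:ℝ) * g r) / p ≤ t ^ p / (p:ℝ) := by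
        rw [h1]
        exact (div_le_div_iff_of_pos_right hp0).2 h2
      have h5 : bb a s (i + 1) r = g r + ∑ m ∈ Finset.Icc 1 p, t ^ m / (m : ℝ) := rfl
      rw [h5]
      linarith
    have hpos_bb : 0 < bb a s (i + 1) r :=
      lt_of_lt_of_le (div_pos (Real.exp_pos _) hp0) hlow_bb
    constructor
    · -- lower bound on the log
      have := Real.log_le_log (div_pos (Real.exp_pos _) hp0) hlow_bb
      rwa [Real.log_div (Real.exp_ne_zero _) (ne_of_gt hp0), Real.log_exp] at this
    · -- upper bound on the log
      have hsum_up : ∑ m ∈ Finset.Icc 1 p, t ^ m / (m : ℝ) ≤ (p:ℝ) * t ^ p := by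
        have h1 : ∀ m ∈ Finset.Icc 1 p, t ^ m / (m : ℝ) ≤ t ^ p := by
          intro m hm
          rw [Finset.mem_Icc] at hm
          have hm1 : (1:ℝ) ≤ (m:ℝ) := by exact_mod_cast hm.1
          calc t ^ m / (m:ℝ) ≤ t ^ m / 1 :=
                div_le_div_of_nonneg_left (pow_nonneg ht0 m) one_pos hm1
            _ = t ^ m := div_one _
            _ ≤ t ^ p := pow_le_pow_right₀ ht1 hm.2
        have h2 := Finset.sum_le_card_nsmul (Finset.Icc 1 p) _ _ h1
        rwa [Nat.card_Icc, Nat.add_sub_cancel, nsmul_eq_mul] at h2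
      have htpow : t ^ p ≤ (r + 2) ^ p * Real.exp ((p:ℝ) * g r) := by
        have h1 : t ^ p ≤ ((r + 2) * Real.exp (g r)) ^ p := pow_le_pow_left₀ ht0 htup p
        rwa [mul_pow, ← Real.exp_nat_mul] at h1
      have hgle : g r ≤ Real.exp ((p:ℝ) * g r) := by
        have h1 : g r + 1 ≤ Real.exp (g r) := Real.add_one_le_exp _
        have h2 : Real.exp (g r) ≤ Real.exp ((p:ℝ) * g r) :=
          Real.exp_le_exp.2 (le_mul_of_one_le_left hg0 hp1)
        linarith
      have hbb_up : bb a s (i + 1) r ≤ (1 + p * (r + 2) ^ p) * Real.exp ((p:ℝ) * g r) := by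
        have h5 : bb a s (i + 1) r = g r + ∑ m ∈ Finset.Icc 1 p, t ^ m / (m : ℝ) := rfl
        rw [h5]
        have h6 : (p:ℝ) * t ^ p ≤ (p:ℝ) * ((r + 2) ^ p * Real.exp ((p:ℝ) * g r)) :=
          mul_le_mul_of_nonneg_left htpow hp0.le
        have h7 : (1 + p * (r + 2) ^ p) * Real.exp ((p:ℝ) * g r)
            = Real.exp ((p:ℝ) * g r) + (p:ℝ) * ((r + 2) ^ p * Real.exp ((p:ℝ) * g r)) := by
          ring
        rw [h7]
        linarith
      have hfac_pos : (0:ℝ) < 1 + p * (r + 2) ^ p := by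
        have : (0:ℝ) ≤ (p:ℝ) * (r + 2) ^ p :=
          mul_nonneg hp0.le (pow_nonneg (by linarith) p)
        linarith
      have := Real.log_le_log hpos_bb hbb_up
      rw [Real.log_mul (ne_of_gt hfac_pos) (Real.exp_ne_zero _), Real.log_exp] at this
      linarith
  -- growth lower bound for g
  have hgrow : ∀ᶠ r in atTop, r / (s 1 : ℝ) ≤ g r := by
    filter_upwards [eventually_ge_atTop (1:ℝ)] with r hr
    have h1 : r ≤ r ^ (s 1) := le_self_pow₀ (by linarith) (Nat.one_le_iff_ne_zero.1 hs1)
    calc r / (s 1 : ℝ) ≤ r ^ (s 1) / (s 1 : ℝ) := (div_le_div_iff_of_pos_right hs1R).2 h1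
      _ ≤ g r := bb_lower ha hs1 i hi hr
  -- the error term tends to zero
  have hE : Tendsto (fun r => Real.log (1 + p * (r + 2) ^ p) / g r) atTop (nhds 0) := by
    have hupfun : Tendsto (fun r : ℝ => ((p:ℝ) + 1) * (s 1) * (Real.log (r + 2) / r)) atTop
        (nhds 0) := by
      have := (log_add_div_tendsto 2).const_mul (((p:ℝ) + 1) * (s 1))
      rwa [mul_zero] at this
    refine tendsto_of_tendsto_of_tendsto_of_le_of_le' tendsto_const_nhds hupfun ?_ ?_
    · -- nonneg
      filter_upwards [hgrow, eventually_gt_atTop (0:ℝ)] with r hgr hr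
      have hgpos : 0 < g r := lt_of_lt_of_le (div_pos hr hs1R) hgr
      refine div_nonneg (Real.log_nonneg ?_) hgpos.le
      have : (0:ℝ) ≤ (p:ℝ) * (r + 2) ^ p := mul_nonneg hp0.le (pow_nonneg (by linarith) p)
      linarith
    · filter_upwards [hgrow, eventually_gt_atTop (0:ℝ), eventually_ge_atTop ((p:ℝ) + 1)]
        with r hgr hr hrp
      have hgpos : 0 < g r := lt_of_lt_of_le (div_pos hr hs1R) hgr
      have hr2 : (1:ℝ) ≤ r + 2 := by linarith
      have h1 : (1:ℝ) ≤ (r + 2) ^ p := by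
        have := pow_le_pow_left₀ (by norm_num : (0:ℝ) ≤ 1) hr2 p
        rwa [one_pow] at this
      have hfac_pos : (0:ℝ) < 1 + p * (r + 2) ^ p := by nlinarith
      have hElog : Real.log (1 + p * (r + 2) ^ p) ≤ ((p:ℝ) + 1) * Real.log (r + 2) := by
        have h2 : 1 + (p:ℝ) * (r + 2) ^ p ≤ ((p:ℝ) + 1) * (r + 2) ^ p := by nlinarith
        have h3 : ((p:ℝ) + 1) * (r + 2) ^ p ≤ (r + 2) * (r + 2) ^ p :=
          mul_le_mul_of_nonneg_right (by linarith) (pow_nonneg (by linarith) p)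
        have h4 : (r + 2) * (r + 2) ^ p = (r + 2) ^ (p + 1) := by
          rw [pow_succ, mul_comm]
        have h5 := Real.log_le_log hfac_pos (le_trans h2 (h3.trans_eq h4))
        rwa [Real.log_pow, Nat.cast_add, Nat.cast_one] at h5
      have hE0 : (0:ℝ) ≤ Real.log (1 + p * (r + 2) ^ p) := Real.log_nonneg (by nlinarith)
      calc Real.log (1 + p * (r + 2) ^ p) / g r
          ≤ Real.log (1 + p * (r + 2) ^ p) / (r / (s 1 : ℝ)) :=
            div_le_div_of_nonneg_left hE0 (div_pos hr hs1R) hgr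
        _ = Real.log (1 + p * (r + 2) ^ p) * (s 1 : ℝ) / r := by
            rw [div_div_eq_mul_div]
        _ ≤ (((p:ℝ) + 1) * Real.log (r + 2)) * (s 1 : ℝ) / r :=
            (div_le_div_iff_of_pos_right hr).2 (mul_le_mul_of_nonneg_right hElog hs1R.le)
        _ = ((p:ℝ) + 1) * (s 1 : ℝ) * (Real.log (r + 2) / r) := by ring
  -- final squeeze
  have hlowfun : Tendsto (fun r => (p:ℝ) - Real.log p / g r) atTop (nhds ((p:ℝ))) := by
    have h1 : Tendsto (fun r => Real.log (p:ℝ) / g r) atTop (nhds 0) :=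
      tendsto_const_nhds.div_atTop hgt
    have h2 := (tendsto_const_nhds (x := ((p:ℝ)))).sub h1
    simpa using h2
  have hupfun : Tendsto (fun r => (p:ℝ) + Real.log (1 + p * (r + 2) ^ p) / g r) atTop
      (nhds ((p:ℝ))) := by
    have h2 := (tendsto_const_nhds (x := ((p:ℝ)))).add hE
    simpa using h2
  refine tendsto_of_tendsto_of_tendsto_of_le_of_le' hlowfun hupfun ?_ ?_
  · filter_upwards [hbound, hgrow, eventually_gt_atTop (0:ℝ)] with r hb hgr hr
    have hgpos : 0 < g r := lt_of_lt_of_le (div_pos hr hs1R) hgr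
    have h1 := (div_le_div_iff_of_pos_right hgpos).2 hb.1
    rwa [sub_div, mul_div_assoc, div_self (ne_of_gt hgpos), mul_one] at h1
  · filter_upwards [hbound, hgrow, eventually_gt_atTop (0:ℝ)] with r hb hgr hr
    have hgpos : 0 < g r := lt_of_lt_of_le (div_pos hr hs1R) hgr
    have h1 := (div_le_div_iff_of_pos_right hgpos).2 hb.2
    rwa [add_div, mul_div_assoc, div_self (ne_of_gt hgpos), mul_one] at h1

end PN
namespace PN

variable {a : ℝ} {s : ℕ → ℕ}

lemma main_bb (ha : -1 ≤ a) (ha' : a ≤ 1) :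
    ∀ k : ℕ, (∀ i, 1 ≤ i → i ≤ k + 2 → 1 ≤ s i) →
    Tendsto (fun r => iterLog (k + 1) (bb a s (k + 2) r) / r ^ (s 1)) atTop
      (nhds ((s 2 : ℝ) / (s 1 : ℝ))) := by
  intro k
  induction k with
  | zero =>
    intro hs
    have hs1 : 1 ≤ s 1 := hs 1 le_rfl (by norm_num)
    have hs2 : 1 ≤ s 2 := hs 2 (by norm_num) (by norm_num)
    have hs1R : (0:ℝ) < (s 1 : ℝ) := by exact_mod_cast Nat.lt_of_lt_of_le Nat.zero_lt_one hs1
    have h1 : Tendsto (fun r => Real.log (bb a s 2 r) / bb a s 1 r) atTop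
        (nhds ((s 2 : ℝ))) := bb_log_ratio ha ha' hs1 le_rfl hs2
    have h2 := bb_one_asymp (a := a) hs1
    have h3 := h1.mul h2
    have heq : (s 2 : ℝ) * (1 / (s 1 : ℝ)) = (s 2 : ℝ) / (s 1 : ℝ) := by ring
    rw [heq] at h3
    refine h3.congr' ?_
    filter_upwards [eventually_ge_atTop (1:ℝ)] with r hr
    have hb1 : (0:ℝ) < bb a s 1 r := by
      have h4 : (0:ℝ) < r ^ (s 1) / (s 1 : ℝ) :=
        div_pos (pow_pos (by linarith) _) hs1R
      exact lt_of_lt_of_le h4 (bb_lower ha hs1 1 le_rfl hr)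
    show Real.log (bb a s 2 r) / bb a s 1 r * (bb a s 1 r / r ^ (s 1))
        = iterLog 1 (bb a s 2 r) / r ^ (s 1)
    rw [show iterLog 1 (bb a s 2 r) = Real.log (bb a s 2 r) from rfl]
    field_simp
  | succ k ih =>
    intro hs
    have hs' : ∀ i, 1 ≤ i → i ≤ k + 2 → 1 ≤ s i := fun i h1 h2 => hs i h1 (by omega)
    have hs1 : 1 ≤ s 1 := hs 1 le_rfl (by omega)
    have hsk : 1 ≤ s (k + 2 + 1) := hs (k + 3) (by omega) (by omega)
    have hv : Tendsto (bb a s (k + 2)) atTop atTop := bb_tendsto ha hs1 (by omega)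
    have hrat := bb_log_ratio ha ha' hs1 (i := k + 2) (by omega) hsk
    have hc : (0:ℝ) < (s (k + 2 + 1) : ℝ) := by
      exact_mod_cast Nat.lt_of_lt_of_le Nat.zero_lt_one hsk
    obtain ⟨L, hL⟩ := exists_iterLog_sub hv hc hrat (k + 1) (by omega)
    have hpow : Tendsto (fun r : ℝ => r ^ (s 1)) atTop atTop :=
      tendsto_pow_atTop (Nat.one_le_iff_ne_zero.1 hs1)
    have hzero := hL.div_atTop hpow
    have hsum := (ih hs').add hzero
    rw [add_zero] at hsum
    refine hsum.congr (fun r => ?_)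
    show iterLog (k + 1) (bb a s (k + 2) r) / r ^ (s 1) +
        (iterLog (k + 1) (Real.log (bb a s (k + 2 + 1) r)) -
          iterLog (k + 1) (bb a s (k + 2) r)) / r ^ (s 1)
        = iterLog (k + 1 + 1) (bb a s (k + 1 + 2) r) / r ^ (s 1)
    rw [show k + 1 + 2 = k + 2 + 1 from rfl,
      iterLog_succ' (k + 1) (bb a s (k + 2 + 1) r)]
    ring

end PN
namespace PN

variable {s : ℕ → ℕ}

lemma polyBeta_ofReal (s : ℕ → ℕ) : ∀ (i : ℕ) (r : ℝ),
    polyBeta s i (r : ℂ) = ((bb (-1) s i r : ℝ) : ℂ) := by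
  intro i
  induction i with
  | zero => intro r; simp [polyBeta, bb]
  | succ i ih =>
    intro r
    show polyBeta s i (r : ℂ) + ∑ m ∈ Finset.Icc 1 (s (i + 1)),
        (1 + ((r : ℂ) - 1) * Complex.exp (polyBeta s i (r : ℂ))) ^ m / (m : ℂ) = _
    rw [ih]
    show _ = ((bb (-1) s i r + ∑ m ∈ Finset.Icc 1 (s (i + 1)),
        (1 + (r + (-1)) * Real.exp (bb (-1) s i r)) ^ m / (m : ℝ) : ℝ) : ℂ)
    push_cast [Complex.ofReal_exp]
    ring_nf

lemma polyBeta_continuous (s : ℕ → ℕ) : ∀ i : ℕ, Continuous (polyBeta s i) := by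
  intro i
  induction i with
  | zero => exact continuous_const
  | succ i ih =>
    refine ih.add (continuous_finset_sum _ fun m _ => ?_)
    exact ((continuous_const.add ((continuous_id.sub continuous_const).mul
      (Complex.continuous_exp.comp ih))).pow m).div_const _

lemma polyBeta_abs_le (s : ℕ → ℕ) : ∀ (i : ℕ) (z : ℂ) (r : ℝ), ‖z‖ ≤ r →
    ‖polyBeta s i z‖ ≤ bb 1 s i r := by
  intro i
  induction i with
  | zero => intro z r _; simp [polyBeta, bb]
  | succ i ih =>
    intro z r hzr
    have hr0 : (0:ℝ) ≤ r := le_trans (norm_nonneg z) hzr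
    have hb := ih z r hzr
    have hfac : ‖1 + (z - 1) * Complex.exp (polyBeta s i z)‖
        ≤ 1 + (r + 1) * Real.exp (bb 1 s i r) := by
      have h1 : ‖z - 1‖ ≤ r + 1 := by
        have h := norm_sub_le z 1
        simp only [norm_one] at h
        linarith
      have h2 : ‖Complex.exp (polyBeta s i z)‖ ≤ Real.exp (bb 1 s i r) := by
        rw [Complex.norm_exp]
        exact Real.exp_le_exp.2 (le_trans (Complex.re_le_norm _) hb)
      calc ‖1 + (z - 1) * Complex.exp (polyBeta s i z)‖
          ≤ ‖(1:ℂ)‖ + ‖(z - 1) * Complex.exp (polyBeta s i z)‖ :=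
            norm_add_le _ _
        _ = 1 + ‖z - 1‖ * ‖Complex.exp (polyBeta s i z)‖ := by
            rw [norm_one, norm_mul]
        _ ≤ 1 + (r + 1) * Real.exp (bb 1 s i r) := by
            have := mul_le_mul h1 h2 (norm_nonneg _) (by linarith)
            linarith
    calc ‖polyBeta s (i + 1) z‖
        ≤ ‖polyBeta s i z‖ + ‖∑ m ∈ Finset.Icc 1 (s (i + 1)),
            (1 + (z - 1) * Complex.exp (polyBeta s i z)) ^ m / (m : ℂ)‖ :=
          norm_add_le _ _
      _ ≤ bb 1 s i r + ∑ m ∈ Finset.Icc 1 (s (i + 1)),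
            (1 + (r + 1) * Real.exp (bb 1 s i r)) ^ m / (m : ℝ) := by
          refine add_le_add hb ?_
          refine le_trans (norm_sum_le _ _) (Finset.sum_le_sum fun m hm => ?_)
          rw [norm_div, norm_pow, Complex.norm_natCast]
          have hm1 : (0:ℝ) < (m:ℝ) := by
            rw [Finset.mem_Icc] at hm
            exact_mod_cast Nat.lt_of_lt_of_le Nat.zero_lt_one hm.1
          exact (div_le_div_iff_of_pos_right hm1).2 (pow_le_pow_left₀ (norm_nonneg _) hfac m)
      _ = bb 1 s (i + 1) r := rfl

end PN

namespace PN

lemma maxModulus_bounds (s : ℕ → ℕ) (i : ℕ) {r : ℝ} (hr : 1 ≤ r) :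
    bb (-1) s i r ≤ maxModulus (polyBeta s i) r ∧
      maxModulus (polyBeta s i) r ≤ bb 1 s i r := by
  have hr0 : (0:ℝ) ≤ r := by linarith
  have hmem_z : (r : ℂ) ∈ Metric.sphere (0 : ℂ) r := by
    simp [Complex.dist_eq, Complex.norm_real, abs_of_nonneg hr0]
  have hmem : ‖polyBeta s i (r : ℂ)‖ ∈
      ((fun z => ‖polyBeta s i z‖) '' Metric.sphere (0 : ℂ) r) :=
    ⟨(r : ℂ), hmem_z, rfl⟩
  have hbdd : BddAbove ((fun z => ‖polyBeta s i z‖) '' Metric.sphere (0 : ℂ) r) :=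
    ((isCompact_sphere (0 : ℂ) r).image
      (continuous_norm.comp (polyBeta_continuous s i))).bddAbove
  constructor
  · have h1 := le_csSup hbdd hmem
    have h2 : ‖polyBeta s i (r : ℂ)‖ = bb (-1) s i r := by
      rw [polyBeta_ofReal, Complex.norm_real, Real.norm_eq_abs, abs_of_nonneg (bb_nonneg (by norm_num) i hr)]
    rw [h2] at h1
    exact h1
  · refine csSup_le ⟨_, hmem⟩ ?_
    rintro x ⟨z, hz, rfl⟩
    have hzr : ‖z‖ ≤ r := by
      rw [Metric.mem_sphere, Complex.dist_eq, sub_zero] at hz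
      exact le_of_eq hz
    exact polyBeta_abs_le s i z r hzr

end PN

/-- For the entire function `f = β_q` (the complexity function of the
polynilpotent variety `N_{s_q}⋯N_{s₁}` of Lie algebras, `q ≥ 2`, `s_i ≥ 1`),
`lim_{r→∞} ln^{(q-1)}(M_f(r)) / r^{s₁} = s₂/s₁`. -/
theorem polynilpotent_complexity_growth (q : ℕ) (hq : 2 ≤ q) (s : ℕ → ℕ)
    (hs : ∀ i, 1 ≤ i → i ≤ q → 1 ≤ s i) :
    Tendsto
      (fun r : ℝ => iterLog (q - 1) (maxModulus (polyBeta s q) r) / r ^ (s 1))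
      atTop (nhds ((s 2 : ℝ) / (s 1 : ℝ))) := by
  obtain ⟨k, rfl⟩ := Nat.exists_eq_add_of_le hq
  have hs' : ∀ i, 1 ≤ i → i ≤ k + 2 → 1 ≤ s i := fun i h1 h2 => hs i h1 (by omega)
  have hs1 : 1 ≤ s 1 := hs 1 le_rfl (by omega)
  have hlow := PN.main_bb (a := -1) (s := s) (by norm_num) (by norm_num) k hs'
  have hup := PN.main_bb (a := 1) (s := s) (by norm_num) (by norm_num) k hs'
  have hq2 : 2 + k = k + 2 := by omega
  rw [hq2, show k + 2 - 1 = k + 1 from by omega]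
  have hball : ∀ᶠ r in atTop, ∀ n ∈ Finset.range (k + 1),
      (1:ℝ) ≤ iterLog n (PN.bb (-1) s (k + 2) r) := by
    rw [Filter.eventually_all_finset]
    intro n _
    exact (PN.tendsto_iterLog_atTop n
      (PN.bb_tendsto (by norm_num) hs1 (by omega))).eventually_ge_atTop 1
  refine tendsto_of_tendsto_of_tendsto_of_le_of_le' hlow hup ?_ ?_
  · filter_upwards [hball, eventually_ge_atTop (1:ℝ)] with r hb hr
    have hbd := PN.maxModulus_bounds s (k + 2) hr
    have h1 : iterLog (k + 1) (PN.bb (-1) s (k + 2) r)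
        ≤ iterLog (k + 1) (maxModulus (polyBeta s (k + 2)) r) :=
      PN.iterLog_mono (k + 1) (fun n hn => hb n (Finset.mem_range.2 hn)) hbd.1
    have hrp : (0:ℝ) < r ^ (s 1) := pow_pos (lt_of_lt_of_le one_pos hr) _
    exact (div_le_div_iff_of_pos_right hrp).2 h1
  · filter_upwards [hball, eventually_ge_atTop (1:ℝ)] with r hb hr
    have hbd := PN.maxModulus_bounds s (k + 2) hr
    have hMlb : ∀ n, n < k + 1 → (1:ℝ) ≤ iterLog n (maxModulus (polyBeta s (k + 2)) r) := by
      intro n hn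
      refine le_trans (hb n (Finset.mem_range.2 hn)) ?_
      exact PN.iterLog_mono n
        (fun m hm => hb m (Finset.mem_range.2 (lt_trans hm hn))) hbd.1
    have h1 : iterLog (k + 1) (maxModulus (polyBeta s (k + 2)) r)
        ≤ iterLog (k + 1) (PN.bb 1 s (k + 2) r) :=
      PN.iterLog_mono (k + 1) hMlb hbd.2
    have hrp : (0:ℝ) < r ^ (s 1) := pow_pos (lt_of_lt_of_le one_pos hr) _
    exact (div_le_div_iff_of_pos_right hrp).2 h1

end
end

section
/- Let A be an associative algebra over a field satisfying a nontrivial multilinear polynomial identity of degree d. Then its codimension sequence satisfies c_n(A) ≤ ((d-1)²)^n for all n ≥ 1. -/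
noncomputable section

variable (K : Type) [Field K]

/-- The multilinear part `P_n` of the free associative algebra on countably
many generators `x_0, x_1, …`: the span of the products
`x_{σ(0)} x_{σ(1)} ⋯ x_{σ(n-1)}` over all permutations `σ`. -/
def assocMultilinearPart (n : ℕ) : Submodule K (FreeAlgebra K ℕ) :=
  Submodule.span K
    { y | ∃ σ : Equiv.Perm (Fin n),
        y = (List.ofFn fun i => FreeAlgebra.ι K (((σ i : Fin n) : ℕ))).prod }

/-- The identities of an associative algebra `A`, as a subspace of the free
associative algebra on countably many generators. -/
def assocIdentitiesOf (A : Type*) [Ring A] [Algebra K A] :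
    Submodule K (FreeAlgebra K ℕ) :=
  Submodule.span K { f | ∀ φ : FreeAlgebra K ℕ →ₐ[K] A, φ f = 0 }

/-- The `n`-th multilinear codimension of an associative algebra `A`. -/
def assocCodimOf (A : Type*) [Ring A] [Algebra K A] (n : ℕ) : ℕ :=
  Module.finrank K
    (Submodule.map (assocIdentitiesOf K A).mkQ (assocMultilinearPart K n))

namespace RegevAux
open Finset
open scoped Classical



/-- σ has a decreasing subsequence of length `d`. -/
def DecrSub (d n : ℕ) (σ : Equiv.Perm (Fin n)) : Prop :=
  ∃ s : Fin d → Fin n, StrictMono s ∧ ∀ i j : Fin d, i < j → σ (s j) < σ (s i)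

/-- `D σ k i`: there is a decreasing subsequence of length `k+1` ending at position `i`. -/
def D {n : ℕ} (σ : Equiv.Perm (Fin n)) (k : ℕ) (i : Fin n) : Prop :=
  ∃ s : Fin (k+1) → Fin n, StrictMono s ∧ (∀ a b : Fin (k+1), a < b → σ (s b) < σ (s a))
    ∧ s (Fin.last k) = i

/-- length minus one of the longest decreasing subsequence ending at `i`. -/
noncomputable def m {n : ℕ} (σ : Equiv.Perm (Fin n)) (i : Fin n) : ℕ :=
  Nat.findGreatest (fun k => D σ k i) n

lemma not_lt_fin_one {a b : Fin (0+1)} (h : a < b) : False := by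
  have hb := b.isLt
  have := Fin.lt_def.mp h
  omega

lemma D_zero {n : ℕ} (σ : Equiv.Perm (Fin n)) (i : Fin n) : D σ 0 i :=
  ⟨fun _ => i, fun a b hab => absurd hab (fun h => not_lt_fin_one h),
    fun a b hab => absurd hab (fun h => not_lt_fin_one h), rfl⟩

lemma D_spec {n : ℕ} (σ : Equiv.Perm (Fin n)) (i : Fin n) : D σ (m σ i) i := by
  have := Nat.findGreatest_spec (P := fun k => D σ k i) (Nat.zero_le n) (D_zero σ i)
  exact this

lemma D_card_le {n : ℕ} {σ : Equiv.Perm (Fin n)} {k : ℕ} {i : Fin n} (h : D σ k i) :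
    k + 1 ≤ n := by
  obtain ⟨s, hs, -, -⟩ := h
  simpa using Fintype.card_le_of_injective s hs.injective

lemma m_le {n d : ℕ} {σ : Equiv.Perm (Fin n)} (hσ : ¬ DecrSub d n σ) (hd : 2 ≤ d)
    (i : Fin n) : m σ i ≤ d - 2 := by
  by_contra hlt
  push_neg at hlt
  obtain ⟨s, hs, hdec, -⟩ := D_spec σ i
  have hdle : d ≤ m σ i + 1 := by omega
  exact hσ ⟨s ∘ Fin.castLE hdle, hs.comp (Fin.strictMono_castLE hdle),
    fun a b hab => hdec _ _ (by simpa using hab)⟩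

lemma snoc_strictMono {n k : ℕ} {s : Fin (k+1) → Fin n} {j : Fin n}
    (hs : StrictMono s) (hj : ∀ a, s a < j) : StrictMono (Fin.snoc s j) := by
  intro a b hab
  rcases Fin.eq_castSucc_or_eq_last b with ⟨b', rfl⟩ | rfl
  · have hab' : a < b'.castSucc := hab
    have ha : a ≠ Fin.last _ := ne_of_lt (lt_of_lt_of_le hab' (Fin.le_last _))
    rcases Fin.eq_castSucc_or_eq_last a with ⟨a', rfl⟩ | rfl
    · rw [Fin.snoc_castSucc, Fin.snoc_castSucc]
      exact hs (by exact_mod_cast hab')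
    · exact absurd rfl ha
  · have ha : a ≠ Fin.last _ := ne_of_lt hab
    rcases Fin.eq_castSucc_or_eq_last a with ⟨a', rfl⟩ | rfl
    · rw [Fin.snoc_castSucc, Fin.snoc_last]
      exact hj a'
    · exact absurd rfl ha

lemma m_lt_m {n : ℕ} {σ : Equiv.Perm (Fin n)} {i j : Fin n}
    (hij : i < j) (hv : σ j < σ i) : m σ i < m σ j := by
  obtain ⟨s, hs, hdec, hlast⟩ := D_spec σ i
  have hsj : ∀ a, s a < j := fun a =>
    lt_of_le_of_lt (hlast ▸ hs.monotone (Fin.le_last a)) hij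
  have hD : D σ (m σ i + 1) j := by
    refine ⟨Fin.snoc s j, snoc_strictMono hs hsj, ?_, Fin.snoc_last ..⟩
    intro a b hab
    rcases Fin.eq_castSucc_or_eq_last b with ⟨b', rfl⟩ | rfl
    · have hab' : a < b'.castSucc := hab
      have ha : a ≠ Fin.last _ := ne_of_lt (lt_of_lt_of_le hab' (Fin.le_last _))
      obtain ⟨a', rfl⟩ := (Fin.eq_castSucc_or_eq_last a).resolve_right ha
      rw [Fin.snoc_castSucc, Fin.snoc_castSucc]
      exact hdec _ _ (by exact_mod_cast hab')
    · have ha : a ≠ Fin.last _ := ne_of_lt hab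
      obtain ⟨a', rfl⟩ := (Fin.eq_castSucc_or_eq_last a).resolve_right ha
      rw [Fin.snoc_castSucc, Fin.snoc_last]
      calc σ j < σ i := hv
        _ = σ (s (Fin.last _)) := by rw [hlast]
        _ ≤ σ (s a') := by
            rcases eq_or_lt_of_le (Fin.le_last a') with h | h
            · rw [h]
            · exact le_of_lt (hdec _ _ h)
  have hle : m σ i + 1 + 1 ≤ n := D_card_le hD
  exact Nat.le_findGreatest (by omega) hD

lemma strictMonoOn_level {n : ℕ} {σ : Equiv.Perm (Fin n)} {i j : Fin n}
    (hij : i < j) (hm : m σ i = m σ j) : σ i < σ j := by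
  rcases lt_trichotomy (σ i) (σ j) with h | h | h
  · exact h
  · exact absurd (σ.injective h) (ne_of_lt hij)
  · exact absurd hm (ne_of_lt (m_lt_m hij h))

/-- Two strictly monotone maps on a finset with the same image agree there. -/
lemma strictMonoOn_image_eq {n : ℕ} {s : Finset (Fin n)} {f g : Fin n → Fin n}
    (hf : StrictMonoOn f s) (hg : StrictMonoOn g s) (h : s.image f = s.image g) :
    ∀ i ∈ s, f i = g i := by
  set k := s.card with hk
  have hcf : (s.image f).card = k := Finset.card_image_of_injOn hf.injOn
  set e := s.orderEmbOfFin (rfl : s.card = k) with he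
  have hmem : ∀ x : Fin k, (e x : Fin n) ∈ s := fun x => s.orderEmbOfFin_mem rfl x
  have hfe : (fun x => f (e x)) = ⇑((s.image f).orderEmbOfFin hcf) := by
    apply Finset.orderEmbOfFin_unique hcf
    · intro x; exact Finset.mem_image_of_mem f (hmem x)
    · intro a b hab; exact hf (hmem a) (hmem b) (e.strictMono hab)
  have hge : (fun x => g (e x)) = ⇑((s.image f).orderEmbOfFin hcf) := by
    apply Finset.orderEmbOfFin_unique hcf
    · intro x; rw [h]; exact Finset.mem_image_of_mem g (hmem x)
    · intro a b hab; exact hg (hmem a) (hmem b) (e.strictMono hab)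
  intro i hi
  have : i ∈ Set.range e := by rw [Finset.range_orderEmbOfFin]; exact hi
  obtain ⟨x, rfl⟩ := this
  exact congrFun (hfe.trans hge.symm) x

lemma count_nodecr (n d : ℕ) (hn : 1 ≤ n) :
    (Finset.univ.filter fun σ : Equiv.Perm (Fin n) => ¬ DecrSub d n σ).card
      ≤ ((d-1)^2)^n := by
  rcases lt_or_ge d 2 with hd | hd
  · convert Nat.zero_le _
    rw [Finset.card_eq_zero, Finset.filter_eq_empty_iff]
    intro σ _
    simp only [not_not]
    interval_cases d
    · exact ⟨Fin.elim0, fun a b hab => a.elim0, fun a => a.elim0⟩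
    · exact ⟨fun _ => ⟨0, hn⟩, fun a b hab => absurd (Subsingleton.elim a b) (ne_of_lt hab),
        fun a b hab => absurd (Subsingleton.elim a b) (ne_of_lt hab)⟩
  · have hd1 : 0 < d - 1 := by omega
    set E : Equiv.Perm (Fin n) → (Fin n → Fin (d-1) × Fin (d-1)) := fun σ i =>
      (⟨min (m σ i) (d-2), by omega⟩, ⟨min (m σ (σ⁻¹ i)) (d-2), by omega⟩) with hE
    have hinj : Set.InjOn E (Finset.univ.filter fun σ : Equiv.Perm (Fin n) => ¬ DecrSub d n σ) := by
      intro σ hσ τ hτ hEq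
      simp only [Finset.coe_filter, Set.mem_setOf_eq, Finset.mem_univ, true_and] at hσ hτ
      have hmσ : ∀ i, m σ i ≤ d - 2 := m_le hσ hd
      have hmτ : ∀ i, m τ i ≤ d - 2 := m_le hτ hd
      have hm1 : ∀ i, m σ i = m τ i := by
        intro i
        have := congrArg (fun F => (F i).1.val) hEq
        simp only [hE] at this
        rw [min_eq_left (hmσ i), min_eq_left (hmτ i)] at this
        exact this
      have hm2 : ∀ v : Fin n, m σ (σ⁻¹ v) = m τ (τ⁻¹ v) := by
        intro v
        have := congrArg (fun F => (F v).2.val) hEq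
        simp only [hE] at this
        rw [min_eq_left (hmσ _), min_eq_left (hmτ _)] at this
        exact this
      apply Equiv.ext
      intro i
      set k := m σ i with hk
      set s : Finset (Fin n) := Finset.univ.filter (fun j => m σ j = k) with hs
      have hsm_σ : StrictMonoOn σ s := by
        intro a ha b hb hab
        simp only [hs, Finset.coe_filter, Set.mem_setOf_eq, Finset.mem_univ, true_and] at ha hb
        exact strictMonoOn_level hab (ha.trans hb.symm)
      have hsm_τ : StrictMonoOn τ s := by
        intro a ha b hb hab
        simp only [hs, Finset.coe_filter, Set.mem_setOf_eq, Finset.mem_univ, true_and] at ha hb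
        rw [hm1] at ha hb
        exact strictMonoOn_level hab (ha.trans hb.symm)
      have himg : s.image σ = s.image τ := by
        ext v
        simp only [Finset.mem_image, hs, Finset.mem_filter, Finset.mem_univ, true_and]
        constructor
        · rintro ⟨j, hj, rfl⟩
          refine ⟨τ⁻¹ (σ j), ?_, by simp⟩
          have h2 := (hm2 (σ j)).symm
          rw [show σ⁻¹ (σ j) = j from σ.symm_apply_apply j] at h2
          rw [hm1, h2]; exact hj
        · rintro ⟨j, hj, rfl⟩
          refine ⟨σ⁻¹ (τ j), ?_, by simp⟩
          have h2 := hm2 (τ j)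
          rw [show τ⁻¹ (τ j) = j from τ.symm_apply_apply j] at h2
          rw [h2, ← hm1]; exact hj
      exact strictMonoOn_image_eq hsm_σ hsm_τ himg i (by simp [hs, hk])
    calc _ ≤ (Finset.univ : Finset (Fin n → Fin (d-1) × Fin (d-1))).card :=
          Finset.card_le_card_of_injOn E (fun σ _ => Finset.mem_univ _) hinj
      _ = ((d-1)^2)^n := by simp [Finset.card_univ, sq]


end RegevAux

namespace RegevAux


open scoped Classical

/-- Monomial attached to a word. -/
def mono (l : List ℕ) : FreeAlgebra K ℕ := (l.map (FreeAlgebra.ι K)).prod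

lemma mono_append (u v : List ℕ) : mono K (u ++ v) = mono K u * mono K v := by
  simp [mono]

lemma mono_flatten (L : List (List ℕ)) :
    mono K L.flatten = (L.map (mono K)).prod := by
  induction L with
  | nil => simp [mono]
  | cons a L ih => simp [mono_append, ih]

/-- The word of a permutation. -/
def word {n : ℕ} (σ : Equiv.Perm (Fin n)) : List ℕ := List.ofFn fun i => (σ i : ℕ)

lemma mono_word {n : ℕ} (σ : Equiv.Perm (Fin n)) :
    mono K (word σ) = (List.ofFn fun i => FreeAlgebra.ι K (((σ i : Fin n) : ℕ))).prod := by
  simp [mono, word, List.map_ofFn]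
  rfl

variable {A : Type*} [Ring A] [Algebra K A]

lemma mem_identities_iff {f : FreeAlgebra K ℕ} :
    f ∈ assocIdentitiesOf K A ↔ ∀ φ : FreeAlgebra K ℕ →ₐ[K] A, φ f = 0 := by
  constructor
  · intro hf φ
    have hle : assocIdentitiesOf K A ≤ LinearMap.ker (φ.toLinearMap : FreeAlgebra K ℕ →ₗ[K] A) := by
      rw [assocIdentitiesOf, Submodule.span_le]
      intro x hx
      exact hx φ
    exact hle hf
  · intro h
    exact Submodule.subset_span h

lemma identities_mul_left (x : FreeAlgebra K ℕ) {f : FreeAlgebra K ℕ}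
    (hf : f ∈ assocIdentitiesOf K A) : x * f ∈ assocIdentitiesOf K A := by
  rw [mem_identities_iff K] at hf ⊢
  intro φ
  rw [map_mul, hf φ, mul_zero]

lemma identities_subst (ψ : FreeAlgebra K ℕ →ₐ[K] FreeAlgebra K ℕ) {f : FreeAlgebra K ℕ}
    (hf : f ∈ assocIdentitiesOf K A) : ψ f ∈ assocIdentitiesOf K A := by
  rw [mem_identities_iff K] at hf ⊢
  intro φ
  have := hf (φ.comp ψ)
  simpa using this

/-- The key rewriting step: modulo the identities, a monomial split into `d` blocks can be
rewritten as a combination of monomials with nontrivially permuted blocks. -/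
lemma rewrite_step {d : ℕ} (c : Equiv.Perm (Fin d) → K) (τ : Equiv.Perm (Fin d))
    (hcτ : c τ ≠ 0)
    (hI : (∑ σ : Equiv.Perm (Fin d),
        c σ • (List.ofFn fun i => FreeAlgebra.ι K (((σ i : Fin d) : ℕ))).prod)
        ∈ assocIdentitiesOf K A)
    (u : List ℕ) (b : Fin d → List ℕ) :
    (assocIdentitiesOf K A).mkQ (mono K (u ++ (List.ofFn b).flatten)) ∈
      Submodule.span K {x | ∃ ρ : Equiv.Perm (Fin d), ρ ≠ 1 ∧
        x = (assocIdentitiesOf K A).mkQ (mono K (u ++ (List.ofFn fun i => b (ρ i)).flatten))} := by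
  set I := assocIdentitiesOf K A with hIdef
  set π := I.mkQ with hπ
  set M : Equiv.Perm (Fin d) → FreeAlgebra K ℕ :=
    fun σ => mono K (u ++ (List.ofFn fun i => b (τ⁻¹ (σ i))).flatten) with hM
  -- the substitution homomorphism
  set χ : FreeAlgebra K ℕ →ₐ[K] FreeAlgebra K ℕ :=
    FreeAlgebra.lift K (fun i : ℕ => if h : i < d then mono K (b (τ⁻¹ ⟨i, h⟩)) else FreeAlgebra.ι K i)
    with hχ
  have hχm : ∀ σ : Equiv.Perm (Fin d),
      χ ((List.ofFn fun i => FreeAlgebra.ι K (((σ i : Fin d) : ℕ))).prod)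
        = mono K ((List.ofFn fun i => b (τ⁻¹ (σ i))).flatten) := by
    intro σ
    rw [map_list_prod, List.map_ofFn, mono_flatten, List.map_ofFn]
    congr 1
    refine congrArg List.ofFn (funext fun i => ?_)
    show χ (FreeAlgebra.ι K ((σ i : ℕ))) = mono K (b (τ⁻¹ (σ i)))
    rw [hχ, FreeAlgebra.lift_ι_apply, dif_pos (Fin.is_lt (σ i))]
  have hmem : (∑ σ : Equiv.Perm (Fin d), c σ • M σ) ∈ I := by
    have h1 : mono K u * χ (∑ σ : Equiv.Perm (Fin d),
        c σ • (List.ofFn fun i => FreeAlgebra.ι K (((σ i : Fin d) : ℕ))).prod) ∈ I :=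
      identities_mul_left K _ (identities_subst K χ hI)
    have h2 : mono K u * χ (∑ σ : Equiv.Perm (Fin d),
        c σ • (List.ofFn fun i => FreeAlgebra.ι K (((σ i : Fin d) : ℕ))).prod)
        = ∑ σ : Equiv.Perm (Fin d), c σ • M σ := by
      rw [map_sum, Finset.mul_sum]
      apply Finset.sum_congr rfl
      intro σ _
      simp only [map_smul, hχm σ, mul_smul_comm, hM, ← mono_append]
    rwa [h2] at h1
  have hsum : (∑ σ : Equiv.Perm (Fin d), c σ • π (M σ)) = 0 := by
    have heq : (∑ σ : Equiv.Perm (Fin d), c σ • π (M σ))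
        = π (∑ σ : Equiv.Perm (Fin d), c σ • M σ) := by
      rw [map_sum]
      exact Finset.sum_congr rfl fun σ _ => (map_smul π (c σ) (M σ)).symm
    rw [heq, hπ, Submodule.mkQ_apply, Submodule.Quotient.mk_eq_zero]
    exact hmem
  have hadd := Finset.add_sum_erase Finset.univ (fun σ => c σ • π (M σ)) (Finset.mem_univ τ)
  have hτval : c τ • π (M τ) = -∑ σ ∈ Finset.univ.erase τ, c σ • π (M σ) := by
    rw [eq_neg_iff_add_eq_zero, ← hsum]
    rw [← hadd]
  have hMτ : M τ = mono K (u ++ (List.ofFn b).flatten) := by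
    simp [hM]
  rw [← hMτ]
  have hπMτ : π (M τ) = (c τ)⁻¹ • (c τ • π (M τ)) := by
    rw [smul_smul, inv_mul_cancel₀ hcτ, one_smul]
  rw [hπMτ, hτval]
  apply Submodule.smul_mem
  apply Submodule.neg_mem
  apply Submodule.sum_mem
  intro σ hσ
  apply Submodule.smul_mem
  apply Submodule.subset_span
  refine ⟨τ⁻¹ * σ, ?_, ?_⟩
  · intro hcontra
    rw [inv_mul_eq_one] at hcontra
    exact (Finset.mem_erase.mp hσ).1 hcontra.symm
  · rfl


end RegevAux

namespace RegevAux


/-- Base-`B` value of a word, used as a lexicographic measure. -/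
def mu (B : ℕ) (l : List ℕ) : ℕ := l.foldl (fun acc x => acc * B + x) 0

lemma foldl_shift (B : ℕ) : ∀ (l : List ℕ) (z : ℕ),
    l.foldl (fun acc x => acc * B + x) z = z * B ^ l.length + mu B l := by
  intro l
  induction l with
  | nil => intro z; simp [mu]
  | cons a l ih =>
    intro z
    show l.foldl _ (z * B + a) = z * B ^ (a :: l).length + mu B (a :: l)
    rw [ih (z * B + a)]
    have : mu B (a :: l) = a * B ^ l.length + mu B l := by
      show l.foldl _ (0 * B + a) = _
      rw [ih (0 * B + a)]
      ring_nf
    rw [this]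
    simp [List.length_cons]
    ring
lemma mu_cons (B a : ℕ) (l : List ℕ) : mu B (a :: l) = a * B ^ l.length + mu B l := by
  show l.foldl _ (0 * B + a) = _
  rw [foldl_shift]
  ring_nf

lemma mu_append (B : ℕ) (p q : List ℕ) :
    mu B (p ++ q) = mu B p * B ^ q.length + mu B q := by
  show (p ++ q).foldl _ 0 = _
  rw [List.foldl_append, foldl_shift]
  rfl

lemma mu_lt_pow (B : ℕ) (l : List ℕ) (h : ∀ x ∈ l, x < B) : mu B l < B ^ l.length := by
  induction l with
  | nil => simp [mu]
  | cons a l ih =>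
    rw [mu_cons]
    have ha : a < B := h a (List.mem_cons_self ..)
    have hl := ih (fun x hx => h x (List.mem_cons_of_mem _ hx))
    calc a * B ^ l.length + mu B l < a * B ^ l.length + B ^ l.length := by omega
      _ = (a + 1) * B ^ l.length := by ring
      _ ≤ B * B ^ l.length := Nat.mul_le_mul_right _ (by omega)
      _ = B ^ (a :: l).length := by rw [List.length_cons]; ring

/-- The lexicographic comparison via `mu`. -/
lemma mu_lt_mu {B : ℕ} (p : List ℕ) {a c : ℕ} {r s : List ℕ} (hac : a < c)
    (hlen : r.length = s.length) (hr : ∀ x ∈ r, x < B) :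
    mu B (p ++ a :: r) < mu B (p ++ c :: s) := by
  rw [mu_append, mu_append, mu_cons, mu_cons]
  simp only [List.length_cons, hlen]
  have h1 : mu B r < B ^ s.length := hlen ▸ mu_lt_pow B r hr
  have h2 : (a+1) * B ^ s.length ≤ c * B ^ s.length :=
    Nat.mul_le_mul_right _ (by omega)
  have h3 : (a+1) * B ^ s.length = a * B ^ s.length + B ^ s.length := by ring
  omega

/-- Splitting a list at increasing cut points. -/
lemma take_cuts (w : List ℕ) (q : ℕ → ℕ) (hmono : ∀ i, q i ≤ q (i+1)) :
    ∀ k, w.take (q k) = w.take (q 0)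
      ++ (List.ofFn fun i : Fin k => ((w.drop (q (i : ℕ))).take (q ((i : ℕ)+1) - q (i : ℕ)))).flatten := by
  intro k
  induction k with
  | zero => simp
  | succ k ih =>
    have hq : q (k+1) = q k + (q (k+1) - q k) := by have := hmono k; omega
    rw [hq, List.take_add, ih, List.ofFn_succ']
    simp only [List.concat_eq_append, List.flatten_append, List.flatten_cons,
      List.flatten_nil, List.append_nil, List.append_assoc]
    congr 1





/-- A word is `d`-bad if it decomposes into a prefix and `d` nonempty blocks with strictly
decreasing leading letters. -/
def BadWord (d : ℕ) (v : List ℕ) : Prop :=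
  ∃ (u : List ℕ) (b : Fin d → List ℕ), (∀ j, b j ≠ []) ∧
    (∀ i j : Fin d, i < j → (b j).headI < (b i).headI) ∧ v = u ++ (List.ofFn b).flatten


lemma headI_eq_getElem {α : Type*} [Inhabited α] (l : List α) (h : l ≠ []) :
    l.headI = l[0]'(List.length_pos_iff.mpr h) := by
  cases l with
  | nil => exact absurd rfl h
  | cons a t => rfl

lemma ofFn_comp_perm {d : ℕ} {α : Type*} (f : Fin d → α) (ρ : Equiv.Perm (Fin d)) :
    (List.ofFn fun i => f (ρ i)).Perm (List.ofFn f) := by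
  rw [List.ofFn_eq_map, List.ofFn_eq_map]
  have h1 : (List.finRange d).map (fun i => f (ρ i)) = ((List.finRange d).map ρ).map f := by
    rw [List.map_map]; rfl
  rw [h1]
  apply List.Perm.map
  rw [List.perm_ext_iff_of_nodup ((List.nodup_finRange d).map ρ.injective) (List.nodup_finRange d)]
  intro a
  simp only [List.mem_map, List.mem_finRange, true_and, iff_true]
  exact ⟨ρ⁻¹ a, by simp⟩

/-- A nontrivial block permutation strictly decreases the measure. -/
lemma mu_decreases {d B : ℕ} (u : List ℕ) (b : Fin d → List ℕ) (ρ : Equiv.Perm (Fin d))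
    (hne : ∀ j, b j ≠ []) (hh : ∀ i j : Fin d, i < j → (b j).headI < (b i).headI)
    (hρ : ρ ≠ 1)
    (hB : ∀ x ∈ u ++ (List.ofFn fun i => b (ρ i)).flatten, x < B) :
    mu B (u ++ (List.ofFn fun i => b (ρ i)).flatten) < mu B (u ++ (List.ofFn b).flatten) := by
  classical
  -- least moved point
  have hFne : (Finset.univ.filter fun i : Fin d => ρ i ≠ i).Nonempty := by
    by_contra hcon
    rw [Finset.not_nonempty_iff_eq_empty, Finset.filter_eq_empty_iff] at hcon
    exact hρ (Equiv.ext fun i => by simpa using hcon (Finset.mem_univ i))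
  set k := (Finset.univ.filter fun i : Fin d => ρ i ≠ i).min' hFne with hk
  have hkmem := (Finset.univ.filter fun i : Fin d => ρ i ≠ i).min'_mem hFne
  rw [Finset.mem_filter] at hkmem
  have hρk : ρ k ≠ k := hkmem.2
  have hfix : ∀ i : Fin d, i < k → ρ i = i := by
    intro i hi
    by_contra hcon
    exact absurd (Finset.min'_le _ i (Finset.mem_filter.mpr ⟨Finset.mem_univ i, hcon⟩))
      (not_le.mpr hi)
  have hkρk : k < ρ k := by
    rcases lt_trichotomy (ρ k) k with h | h | h
    · exact absurd (ρ.injective (hfix (ρ k) h)) hρk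
    · exact absurd h hρk
    · exact h
  -- identify blocks
  set L : List (List ℕ) := List.ofFn b with hL
  set L' : List (List ℕ) := List.ofFn (fun i => b (ρ i)) with hL'
  have hLlen : L.length = d := by simp [hL]
  have hL'len : L'.length = d := by simp [hL']
  have hkd : (k : ℕ) < d := k.isLt
  have htake : L'.take (k : ℕ) = L.take (k : ℕ) := by
    apply List.ext_getElem
    · simp [hL, hL']
    · intro i h1 h2
      have hid : i < d := by
        simp only [List.length_take, hL'len] at h1; omega
      have hik : i < (k : ℕ) := by
        simp only [List.length_take, hL'len] at h1; omega
      rw [List.getElem_take, List.getElem_take]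
      simp only [hL, hL', List.getElem_ofFn]
      congr 1
      exact hfix ⟨i, hid⟩ (by simpa [Fin.lt_def] using hik)
  -- write both flattened lists with an explicit head at position k
  have hsplit : ∀ (c : Fin d → List ℕ), c k ≠ [] →
      (List.ofFn c).flatten = ((List.ofFn c).take (k : ℕ)).flatten
        ++ ((c k).headI :: ((c k).tail ++ ((List.ofFn c).drop ((k : ℕ)+1)).flatten)) := by
    intro c hc
    conv_lhs => rw [← List.take_append_drop (k : ℕ) (List.ofFn c), List.flatten_append]
    congr 1
    have hMlen : (List.ofFn c).length = d := by simp
    have hdrop : (List.ofFn c).drop (k : ℕ) = c k :: (List.ofFn c).drop ((k : ℕ)+1) := by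
      rw [List.drop_eq_getElem_cons (by omega)]
      congr 1
      · simp
    rw [hdrop, List.flatten_cons]
    have hck : c k = (c k).headI :: (c k).tail := by
      cases hcc : c k with
      | nil => exact absurd hcc hc
      | cons x t => rfl
    conv_lhs => rw [hck]
    simp
  have hsplitL := hsplit b (hne k)
  have hsplitL' := hsplit (fun i => b (ρ i)) (hne (ρ k))
  set p := u ++ (L.take (k : ℕ)).flatten with hp
  set aa := (b (ρ k)).headI with haa
  set cc := (b k).headI with hcc
  set r := (b (ρ k)).tail ++ (L'.drop ((k : ℕ)+1)).flatten with hr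
  set s := (b k).tail ++ (L.drop ((k : ℕ)+1)).flatten with hs
  have hwords' : u ++ L'.flatten = p ++ aa :: r := by
    rw [hL', hsplitL', ← hL', htake, ← List.append_assoc, hp]
  have hwords : u ++ L.flatten = p ++ cc :: s := by
    rw [hL, hsplitL, ← hL, ← List.append_assoc, hp]
  rw [hwords', hwords]
  have hflatperm : L'.flatten.Perm L.flatten := (ofFn_comp_perm b ρ).flatten
  apply mu_lt_mu
  · exact hh k (ρ k) hkρk
  · have h1 : (p ++ aa :: r).length = (p ++ cc :: s).length := by
      rw [← hwords', ← hwords]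
      simp [hflatperm.length_eq]
    simp only [List.length_append, List.length_cons] at h1
    omega
  · intro x hx
    apply hB
    rw [hwords']
    simp only [List.mem_append, List.mem_cons]
    tauto




lemma word_length {n : ℕ} (σ : Equiv.Perm (Fin n)) : (word σ).length = n := by
  simp [word]

lemma word_nodup {n : ℕ} (σ : Equiv.Perm (Fin n)) : (word σ).Nodup :=
  List.nodup_ofFn.mpr (fun a b hab => σ.injective (Fin.ext hab))

lemma word_perm_range {n : ℕ} (σ : Equiv.Perm (Fin n)) :
    (word σ).Perm (List.range n) := by
  rw [List.perm_ext_iff_of_nodup (word_nodup σ) List.nodup_range]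
  intro a
  simp only [word, List.mem_ofFn, Set.mem_range, List.mem_range]
  constructor
  · rintro ⟨i, rfl⟩; exact (σ i).isLt
  · intro ha; exact ⟨σ⁻¹ ⟨a, ha⟩, by simp⟩

lemma exists_word {n : ℕ} {v : List ℕ} (hv : v.Perm (List.range n)) :
    ∃ σ : Equiv.Perm (Fin n), v = word σ := by
  have hlen : v.length = n := by simpa using hv.length_eq
  have hnodup : v.Nodup := hv.nodup_iff.mpr List.nodup_range
  have hmem : ∀ x ∈ v, x < n := fun x hx => List.mem_range.mp (hv.mem_iff.mp hx)
  have hvi : ∀ i : Fin n, v[(i : ℕ)]'(by omega) < n :=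
    fun i => hmem _ (List.getElem_mem _)
  set f : Fin n → Fin n := fun i => ⟨v[(i : ℕ)]'(by omega), hvi i⟩ with hf
  have hinj : Function.Injective f := by
    intro a b hab
    have h1 : v[(a : ℕ)]'(by omega) = v[(b : ℕ)]'(by omega) := congrArg Fin.val hab
    have := (hnodup.getElem_inj_iff).mp h1
    exact Fin.ext this
  set σ : Equiv.Perm (Fin n) := Equiv.ofBijective f ((Finite.injective_iff_bijective).mp hinj)
    with hσ
  refine ⟨σ, ?_⟩
  apply List.ext_getElem
  · simp [word, hlen]
  · intro i h1 h2
    simp only [word, List.getElem_ofFn]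
    rfl

lemma badWord_of_decrSub {d n : ℕ} {σ : Equiv.Perm (Fin n)} (h : DecrSub d n σ) :
    BadWord d (word σ) := by
  rcases Nat.eq_zero_or_pos d with rfl | hdpos
  · exact ⟨word σ, Fin.elim0, fun j => j.elim0, fun i => i.elim0, by simp⟩
  obtain ⟨s, hs, hdec⟩ := h
  have hn : 0 < n := (s ⟨0, hdpos⟩).pos
  set w := word σ with hw
  have hwlen : w.length = n := word_length σ
  set q : ℕ → ℕ := fun i => if h : i < d then (s ⟨i, h⟩ : ℕ) else n with hq
  have hqlt : ∀ i, i < d → q i < q (i+1) := by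
    intro i hi
    simp only [hq]
    rw [dif_pos hi]
    split_ifs with h2
    · exact hs (by simp [Fin.lt_def])
    · exact (s ⟨i, hi⟩).isLt
  have hqn : ∀ i, q i ≤ n := by
    intro i
    simp only [hq]
    split_ifs with h1
    · exact (s ⟨i, h1⟩).isLt.le
    · exact le_refl n
  have hmono : ∀ i, q i ≤ q (i+1) := by
    intro i
    rcases lt_or_ge i d with h1 | h1
    · exact (hqlt i h1).le
    · simp only [hq]
      rw [dif_neg (by omega), dif_neg (by omega)]
  have hcut := take_cuts w q hmono d
  have hqd : q d = n := by simp [hq]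
  set b : Fin d → List ℕ :=
    fun i => ((w.drop (q (i : ℕ))).take (q ((i : ℕ)+1) - q (i : ℕ))) with hb
  have hbpos : ∀ j : Fin d, 0 < (b j).length := by
    intro j
    simp only [hb, List.length_take, List.length_drop, hwlen]
    have h1 := hqlt (j : ℕ) j.isLt
    have h2 := hqn ((j : ℕ)+1)
    omega
  have hhead : ∀ j : Fin d, (b j).headI = (σ (s j) : ℕ) := by
    intro j
    have hbne : b j ≠ [] := List.ne_nil_of_length_pos (hbpos j)
    rw [headI_eq_getElem _ hbne]
    rw [List.getElem_take, List.getElem_drop]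
    have hqj : q (j : ℕ) = (s j : ℕ) := by
      simp only [hq]; rw [dif_pos j.isLt]
    simp only [Nat.add_zero, hqj, hw, word, List.getElem_ofFn]
  refine ⟨w.take (q 0), b, ?_, ?_, ?_⟩
  · exact fun j => List.ne_nil_of_length_pos (hbpos j)
  · intro i j hij
    rw [hhead i, hhead j]
    exact hdec i j hij
  · rw [← hcut, hqd, ← hwlen, List.take_length]


end RegevAux

namespace RegevAux

variable {A : Type*} [Ring A] [Algebra K A]

lemma span_good_aux {d : ℕ} (c : Equiv.Perm (Fin d) → K) (τ : Equiv.Perm (Fin d))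
    (hcτ : c τ ≠ 0)
    (hI : (∑ σ : Equiv.Perm (Fin d),
        c σ • (List.ofFn fun i => FreeAlgebra.ι K (((σ i : Fin d) : ℕ))).prod)
        ∈ assocIdentitiesOf K A) (n : ℕ) :
    ∀ (N : ℕ) (v : List ℕ), v.Perm (List.range n) → mu n v = N →
      (assocIdentitiesOf K A).mkQ (mono K v) ∈
        Submodule.span K {x | ∃ σ : Equiv.Perm (Fin n), ¬ BadWord d (word σ) ∧
          x = (assocIdentitiesOf K A).mkQ (mono K (word σ))} := by
  intro N
  induction N using Nat.strong_induction_on with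
  | _ N ih =>
    intro v hv hN
    by_cases hbad : BadWord d v
    · obtain ⟨u, b, hne, hheads, hveq⟩ := hbad
      subst hveq
      have step := rewrite_step K c τ hcτ hI u b
      refine Submodule.span_le.mpr ?_ step
      rintro x ⟨ρ, hρ, rfl⟩
      have hperm' : (u ++ (List.ofFn fun i => b (ρ i)).flatten).Perm (List.range n) :=
        List.Perm.trans (List.Perm.append_left u (ofFn_comp_perm b ρ).flatten) hv
      have hBent : ∀ x ∈ (u ++ (List.ofFn fun i => b (ρ i)).flatten), x < n :=
        fun x hx => List.mem_range.mp (hperm'.mem_iff.mp hx)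
      have hdecr := mu_decreases u b ρ hne hheads hρ hBent
      exact ih _ (by rw [← hN]; exact hdecr) _ hperm' rfl
    · obtain ⟨σ, rfl⟩ := exists_word hv
      exact Submodule.subset_span ⟨σ, hbad, rfl⟩

end RegevAux

set_option maxHeartbeats 1600000 in
open RegevAux in
/-- **Regev–Latyshev bound.** If an associative algebra `A` over a field
satisfies a nontrivial multilinear identity of degree `d`, then
`c_n(A) ≤ ((d-1)²)^n` for all `n ≥ 1`. -/
theorem regev_latyshev_codim_bound (A : Type*) [Ring A] [Algebra K A]
    (d : ℕ) (hd : 1 ≤ d)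
    (hid : ∃ f ∈ assocMultilinearPart K d, f ≠ 0 ∧
      ∀ φ : FreeAlgebra K ℕ →ₐ[K] A, φ f = 0) :
    ∀ n : ℕ, 1 ≤ n → assocCodimOf K A n ≤ ((d - 1) ^ 2) ^ n := by
  classical
  intro n hn
  obtain ⟨f, hfP, hfne, hfid⟩ := hid
  have hPd : assocMultilinearPart K d = Submodule.span K
      (Set.range fun σ : Equiv.Perm (Fin d) =>
        (List.ofFn fun i => FreeAlgebra.ι K (((σ i : Fin d) : ℕ))).prod) := by
    rw [assocMultilinearPart]
    congr 1
    ext y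
    simp only [Set.mem_setOf_eq, Set.mem_range]
    exact ⟨fun ⟨σ, h⟩ => ⟨σ, h.symm⟩, fun ⟨σ, h⟩ => ⟨σ, h.symm⟩⟩
  rw [hPd, Submodule.mem_span_range_iff_exists_fun] at hfP
  obtain ⟨c, hc⟩ := hfP
  have hτ : ∃ τ, c τ ≠ 0 := by
    by_contra hcon
    push_neg at hcon
    apply hfne
    rw [← hc]
    simp [hcon]
  obtain ⟨τ, hcτ⟩ := hτ
  have hI : (∑ σ : Equiv.Perm (Fin d),
      c σ • (List.ofFn fun i => FreeAlgebra.ι K (((σ i : Fin d) : ℕ))).prod)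
      ∈ assocIdentitiesOf K A := by
    rw [hc]
    exact (mem_identities_iff K).mpr hfid
  rw [assocCodimOf]
  set π := (assocIdentitiesOf K A).mkQ with hπ
  set T : Finset (FreeAlgebra K ℕ ⧸ assocIdentitiesOf K A) :=
    (Finset.univ.filter fun σ : Equiv.Perm (Fin n) => ¬ BadWord d (word σ)).image
      (fun σ => π (mono K (word σ))) with hT
  have hST : {x | ∃ σ : Equiv.Perm (Fin n), ¬ BadWord d (word σ) ∧
      x = π (mono K (word σ))} = (T : Set _) := by
    ext x
    simp only [hT, Set.mem_setOf_eq, Finset.coe_image, Finset.coe_filter,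
      Set.mem_image, Set.mem_setOf_eq, Finset.mem_univ, true_and]
    exact ⟨fun ⟨σ, h1, h2⟩ => ⟨σ, h1, h2.symm⟩, fun ⟨σ, h1, h2⟩ => ⟨σ, h1, h2.symm⟩⟩
  have hle : Submodule.map π (assocMultilinearPart K n)
      ≤ Submodule.span K (T : Set _) := by
    rw [assocMultilinearPart, Submodule.map_span, Submodule.span_le]
    rintro x ⟨y, ⟨σ, rfl⟩, rfl⟩
    have h2 := span_good_aux K c τ hcτ hI n (mu n (word σ)) (word σ)
      (word_perm_range σ) rfl
    rw [hST] at h2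
    have h1 : π ((List.ofFn fun i => FreeAlgebra.ι K (((σ i : Fin n) : ℕ))).prod)
        = π (mono K (word σ)) := by rw [mono_word]
    rw [h1]
    exact h2
  haveI : FiniteDimensional K (Submodule.span K (T : Set (FreeAlgebra K ℕ ⧸ assocIdentitiesOf K A))) :=
    FiniteDimensional.span_of_finite K T.finite_toSet
  have h9 : Module.finrank K (Submodule.span K (T : Set (FreeAlgebra K ℕ ⧸ assocIdentitiesOf K A))) ≤ T.card := by
    haveI : Fintype (T : Set (FreeAlgebra K ℕ ⧸ assocIdentitiesOf K A)) := FinsetCoe.fintype T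
    have h8 := finrank_span_le_card (R := K) (T : Set (FreeAlgebra K ℕ ⧸ assocIdentitiesOf K A))
    simpa using h8
  have h10 : Module.finrank K (Submodule.map π (assocMultilinearPart K n))
      ≤ Module.finrank K (Submodule.span K (T : Set (FreeAlgebra K ℕ ⧸ assocIdentitiesOf K A))) :=
    Submodule.finrank_mono hle
  have h11 : T.card ≤ (Finset.univ.filter fun σ : Equiv.Perm (Fin n) => ¬ BadWord d (word σ)).card :=
    Finset.card_image_le
  have h12 : (Finset.univ.filter fun σ : Equiv.Perm (Fin n) => ¬ BadWord d (word σ)).card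
      ≤ (Finset.univ.filter fun σ : Equiv.Perm (Fin n) => ¬ DecrSub d n σ).card := by
    apply Finset.card_le_card
    intro σ hσ
    rw [Finset.mem_filter] at hσ ⊢
    exact ⟨hσ.1, fun hdecr => hσ.2 (badWord_of_decrSub hdecr)⟩
  have h13 := count_nodecr n d hn
  omega

end
end
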